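/- arXiv:0704.2813 — 7 statements merged into one kernel-verified Lean document; each statement's English description precedes it below -/
import Mathlib

section
/- For all natural numbers u, l, d and all n ≥ 2, the (u,l,d)-Motzkin numbers satisfy the recursion relation (n+2)·m_n^{(u,l,d)} = l·(2n+1)·m_{n-1}^{(u,l,d)} + (4ud − l²)·(n−1)·m_{n-2}^{(u,l,d)} (as an identity of integers, where 4ud − l² may be negative). -/
open PowerSeries Finset

/-- The weight (number of color choices) of a single step of vertical displacement `z`:
up-steps `(1,j)` have weight `u j`, the level-step `(1,0)` has weight `l`, and
down-steps `(1,-j)` have weight `d j`. -/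
def stepWeight (u : ℕ → ℕ) (l : ℕ) (d : ℕ → ℕ) (z : ℤ) : ℕ :=
  if 0 < z then u z.toNat else if z < 0 then d (-z).toNat else l

/-- `motzkinCount r u l d s t n` is the weighted number `|𝒜_{s,t}(n)|` of lattice paths of
length `n` using admissible steps `(1,z)` with `z ∈ {-r, …, r}` (step `i` is encoded by
`f i : Fin (2*r+1)` via `z = (f i : ℤ) - r`), starting at height `s`, ending at height `t`,
and never going below the x-axis; each path is counted with weight the product of the
weights of its steps (i.e. the number of its colorings). -/
def motzkinCount (r : ℕ) (u : ℕ → ℕ) (l : ℕ) (d : ℕ → ℕ) (s t : ℕ) (n : ℕ) : ℕ :=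
  ∑ f : Fin n → Fin (2 * r + 1),
    if (∀ k : Fin (n + 1),
          0 ≤ (s : ℤ) + ∑ i : Fin n, if (i : ℕ) < (k : ℕ) then ((f i : ℤ) - r) else 0) ∧
        (s : ℤ) + (∑ i : Fin n, ((f i : ℤ) - r)) = t
    then ∏ i : Fin n, stepWeight u l d ((f i : ℤ) - r)
    else 0

namespace MotzkinAux

open Nat (factorial)
open scoped Nat

/-- Trinomial coefficient with integer indices (zero for negative indices). -/
def tri (n : ℕ) (p q : ℤ) : ℕ :=
  if 0 ≤ p ∧ 0 ≤ q then n.choose p.toNat * (n - p.toNat).choose q.toNat else 0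

lemma tri_of_neg_left {n : ℕ} {p q : ℤ} (h : p < 0) : tri n p q = 0 := by
  rw [tri, if_neg]; omega

lemma tri_of_neg_right {n : ℕ} {p q : ℤ} (h : q < 0) : tri n p q = 0 := by
  rw [tri, if_neg]; omega

lemma tri_nat (n p q : ℕ) : tri n p q = n.choose p * (n - p).choose q := by
  simp [tri]

lemma tri_eq_zero {n : ℕ} {p q : ℤ} (h : (n : ℤ) < p + q) : tri n p q = 0 := by
  rcases lt_or_ge p 0 with hp | hp
  · exact tri_of_neg_left hp
  rcases lt_or_ge q 0 with hq | hq
  · exact tri_of_neg_right hq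
  rw [tri, if_pos ⟨hp, hq⟩]
  rcases le_or_gt p.toNat n with hpn | hpn
  · have : n - p.toNat < q.toNat := by omega
    rw [Nat.choose_eq_zero_of_lt this, mul_zero]
  · rw [Nat.choose_eq_zero_of_lt hpn, zero_mul]

lemma tri_symm (n : ℕ) (p q : ℤ) : tri n p q = tri n q p := by
  rcases lt_or_ge p 0 with hp | hp
  · rw [tri_of_neg_left hp, tri_of_neg_right hp]
  rcases lt_or_ge q 0 with hq | hq
  · rw [tri_of_neg_right hq, tri_of_neg_left hq]
  rcases lt_or_ge (n : ℤ) (p + q) with h | h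
  · rw [tri_eq_zero h, tri_eq_zero (by omega)]
  obtain ⟨P, rfl⟩ : ∃ P : ℕ, p = P := ⟨p.toNat, by omega⟩
  obtain ⟨Q, rfl⟩ : ∃ Q : ℕ, q = Q := ⟨q.toNat, by omega⟩
  have hPQ : P + Q ≤ n := by exact_mod_cast h
  rw [tri_nat, tri_nat]
  have h1 := Nat.choose_mul (n := n) (k := P + Q) (s := P) (Nat.le_add_right _ _)
  have h2 := Nat.choose_mul (n := n) (k := P + Q) (s := Q) (Nat.le_add_left _ _)
  rw [Nat.add_sub_cancel_left] at h1
  rw [Nat.add_sub_cancel] at h2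
  have h3 : (P + Q).choose P = (P + Q).choose Q := by
    rw [← Nat.choose_symm (Nat.le_add_right _ _), Nat.add_sub_cancel_left]
  rw [← h1, ← h2, h3]

lemma tri_pascal (n : ℕ) (p q : ℤ) :
    tri (n + 1) p q = tri n (p - 1) q + tri n p (q - 1) + tri n p q := by
  rcases lt_or_ge p 0 with hp | hp
  · rw [tri_of_neg_left (n := n + 1) (q := q) hp, tri_of_neg_left (n := n) (q := q)
      (show p - 1 < 0 by omega), tri_of_neg_left (n := n) (q := q - 1) hp,
      tri_of_neg_left (n := n) (q := q) hp]
  rcases lt_or_ge q 0 with hq | hq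
  · rw [tri_of_neg_right (n := n + 1) (p := p) hq, tri_of_neg_right (n := n) (p := p - 1) hq,
      tri_of_neg_right (n := n) (p := p) (show q - 1 < 0 by omega),
      tri_of_neg_right (n := n) (p := p) hq]
  obtain ⟨P, rfl⟩ : ∃ P : ℕ, p = P := ⟨p.toNat, by omega⟩
  obtain ⟨Q, rfl⟩ : ∃ Q : ℕ, q = Q := ⟨q.toNat, by omega⟩
  rcases Nat.eq_zero_or_pos P with rfl | hP
  · rcases Nat.eq_zero_or_pos Q with rfl | hQ
    · rw [tri_of_neg_left (n := n) (q := ((0:ℕ):ℤ)) (show ((0:ℕ):ℤ) - 1 < 0 by norm_num),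
        tri_of_neg_right (n := n) (p := ((0:ℕ):ℤ)) (show ((0:ℕ):ℤ) - 1 < 0 by norm_num)]
      simp [tri]
    · obtain ⟨Q', rfl⟩ : ∃ Q', Q = Q' + 1 := ⟨Q - 1, by omega⟩
      rw [tri_of_neg_left (n := n) (q := ((Q' + 1 : ℕ):ℤ))
          (show ((0:ℕ):ℤ) - 1 < 0 by norm_num),
        show ((Q' + 1 : ℕ) : ℤ) - 1 = ((Q' : ℕ) : ℤ) by push_cast; ring,
        tri_nat, tri_nat, tri_nat]
      simp [Nat.choose_succ_succ]
  · obtain ⟨P', rfl⟩ : ∃ P', P = P' + 1 := ⟨P - 1, by omega⟩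
    rcases Nat.eq_zero_or_pos Q with rfl | hQ
    · rw [tri_of_neg_right (n := n) (p := ((P' + 1 : ℕ):ℤ))
          (show ((0:ℕ):ℤ) - 1 < 0 by norm_num),
        show ((P' + 1 : ℕ) : ℤ) - 1 = ((P' : ℕ) : ℤ) by push_cast; ring,
        tri_nat, tri_nat, tri_nat]
      simp [Nat.choose_succ_succ, Nat.add_comm]
    · obtain ⟨Q', rfl⟩ : ∃ Q', Q = Q' + 1 := ⟨Q - 1, by omega⟩
      rw [show ((P' + 1 : ℕ) : ℤ) - 1 = ((P' : ℕ) : ℤ) by push_cast; ring,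
        show ((Q' + 1 : ℕ) : ℤ) - 1 = ((Q' : ℕ) : ℤ) by push_cast; ring,
        tri_nat, tri_nat, tri_nat, tri_nat]
      rcases le_or_gt (P' + 1) n with hPn1 | hPn1
      · have hs1 : n + 1 - (P' + 1) = (n - (P' + 1)) + 1 := by omega
        rw [hs1, show n - P' = (n - (P' + 1)) + 1 by omega, Nat.choose_succ_succ n P',
          Nat.choose_succ_succ (n - (P' + 1)) Q']
        ring
      rcases le_or_gt P' n with hPn | hPn
      · -- P' = n
        rw [Nat.choose_eq_zero_of_lt (show n < P' + 1 by omega),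
          show n + 1 - (P' + 1) = 0 by omega, show n - P' = 0 by omega,
          Nat.choose_eq_zero_of_lt (show 0 < Q' + 1 by omega)]
        simp
      · rw [Nat.choose_eq_zero_of_lt (show n + 1 < P' + 1 by omega),
          Nat.choose_eq_zero_of_lt (show n < P' by omega),
          Nat.choose_eq_zero_of_lt (show n < P' + 1 by omega)]
        simp

/-- Reflected ballot-type number. -/
def NN (n : ℕ) (a s : ℤ) : ℤ := (tri n a (a + s) : ℤ) - (tri n (a - 1) (a + s + 1) : ℤ)

lemma NN_eq_zero {n : ℕ} {a s : ℤ} (h : (n : ℤ) < 2 * a + s) : NN n a s = 0 := by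
  rw [NN, tri_eq_zero (by omega), tri_eq_zero (by omega)]
  simp

lemma NN_of_neg_left {n : ℕ} {a s : ℤ} (h : a < 0) : NN n a s = 0 := by
  rw [NN, tri_of_neg_left h, tri_of_neg_left (by omega)]
  simp

lemma NN_neg_one (n : ℕ) (a : ℤ) : NN n a (-1) = 0 := by
  rw [NN, show a + -1 = a - 1 by ring, show a - 1 + 1 = a by ring, tri_symm]
  simp

lemma NN_pascal (n : ℕ) (a s : ℤ) :
    NN (n + 1) a s = NN n (a - 1) (s + 1) + NN n a s + NN n a (s - 1) := by
  simp only [NN]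
  rw [tri_pascal n a (a + s), tri_pascal n (a - 1) (a + s + 1),
    show a + s + 1 - 1 = a + s by ring, show a - 1 + (s + 1) = a + s by ring,
    show a + (s - 1) = a + s - 1 by ring, show a + s - 1 + 1 = a + s by ring]
  push_cast
  ring

/-- Explicit formula candidate for the weighted Motzkin ballot numbers. -/
def F (u l d : ℕ) (s n : ℕ) : ℤ :=
  ∑ a ∈ Finset.range (n + 1),
    if 2 * a + s ≤ n then
      (u : ℤ) ^ a * (d : ℤ) ^ (a + s) * (l : ℤ) ^ (n - (2 * a + s)) * NN n a s
    else 0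

variable (u l d : ℕ)

lemma FB (s n : ℕ) :
    (∑ a ∈ Finset.range (n + 2),
      if 2 * a + s ≤ n + 1 then
        (u : ℤ) ^ a * (d : ℤ) ^ (a + s) * (l : ℤ) ^ (n + 1 - (2 * a + s)) * NN n a s
      else 0) = l * F u l d s n := by
  rw [Finset.sum_range_succ, if_neg (by omega), add_zero, F, Finset.mul_sum]
  refine Finset.sum_congr rfl fun a _ => ?_
  by_cases h : 2 * a + s ≤ n
  · rw [if_pos h, if_pos (by omega : 2 * a + s ≤ n + 1),
      show n + 1 - (2 * a + s) = (n - (2 * a + s)) + 1 by omega, pow_succ]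
    ring
  · rw [if_neg h, mul_zero]
    by_cases h1 : 2 * a + s ≤ n + 1
    · rw [if_pos h1, NN_eq_zero (by exact_mod_cast (by omega : (n : ℤ) < 2 * a + s)), mul_zero]
    · rw [if_neg h1]

lemma FA (s n : ℕ) :
    (∑ a ∈ Finset.range (n + 2),
      if 2 * a + s ≤ n + 1 then
        (u : ℤ) ^ a * (d : ℤ) ^ (a + s) * (l : ℤ) ^ (n + 1 - (2 * a + s)) *
          NN n ((a : ℤ) - 1) ((s : ℤ) + 1)
      else 0) = u * F u l d (s + 1) n := by
  rw [Finset.sum_range_succ']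
  have h0 : (if 2 * 0 + s ≤ n + 1 then
      (u : ℤ) ^ 0 * (d : ℤ) ^ (0 + s) * (l : ℤ) ^ (n + 1 - (2 * 0 + s)) *
        NN n ((0 : ℕ) - 1 : ℤ) ((s : ℤ) + 1) else 0) = 0 := by
    rw [NN_of_neg_left (by norm_num)]
    simp
  rw [h0, add_zero, F, Finset.mul_sum]
  refine Finset.sum_congr rfl fun b _ => ?_
  by_cases h : 2 * b + (s + 1) ≤ n
  · rw [if_pos h, if_pos (by omega : 2 * (b + 1) + s ≤ n + 1),
      show ((b + 1 : ℕ) : ℤ) - 1 = (b : ℤ) by push_cast; ring,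
      show ((s : ℤ) + 1) = ((s + 1 : ℕ) : ℤ) by push_cast; ring,
      show n + 1 - (2 * (b + 1) + s) = n - (2 * b + (s + 1)) by omega,
      show (b + 1) + s = b + (s + 1) by omega, pow_succ]
    ring
  · rw [if_neg h, mul_zero, if_neg (by omega : ¬ 2 * (b + 1) + s ≤ n + 1)]

lemma FC (s' n : ℕ) :
    (∑ a ∈ Finset.range (n + 2),
      if 2 * a + (s' + 1) ≤ n + 1 then
        (u : ℤ) ^ a * (d : ℤ) ^ (a + (s' + 1)) * (l : ℤ) ^ (n + 1 - (2 * a + (s' + 1))) *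
          NN n (a : ℤ) (((s' + 1 : ℕ) : ℤ) - 1)
      else 0) = d * F u l d s' n := by
  rw [Finset.sum_range_succ, if_neg (by omega), add_zero, F, Finset.mul_sum]
  refine Finset.sum_congr rfl fun a _ => ?_
  by_cases h : 2 * a + s' ≤ n
  · rw [if_pos h, if_pos (by omega : 2 * a + (s' + 1) ≤ n + 1),
      show ((s' + 1 : ℕ) : ℤ) - 1 = (s' : ℤ) by push_cast; ring,
      show n + 1 - (2 * a + (s' + 1)) = n - (2 * a + s') by omega,
      show a + (s' + 1) = (a + s') + 1 by omega, pow_succ]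
    ring
  · rw [if_neg h, mul_zero, if_neg (by omega : ¬ 2 * a + (s' + 1) ≤ n + 1)]

lemma F_succ (s n : ℕ) :
    F u l d s (n + 1) =
      u * F u l d (s + 1) n + l * F u l d s n +
        (if s = 0 then 0 else (d : ℤ) * F u l d (s - 1) n) := by
  have key : F u l d s (n + 1) =
      (∑ a ∈ Finset.range (n + 2),
        if 2 * a + s ≤ n + 1 then
          (u : ℤ) ^ a * (d : ℤ) ^ (a + s) * (l : ℤ) ^ (n + 1 - (2 * a + s)) *
            NN n ((a : ℤ) - 1) ((s : ℤ) + 1)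
        else 0)
      + (∑ a ∈ Finset.range (n + 2),
        if 2 * a + s ≤ n + 1 then
          (u : ℤ) ^ a * (d : ℤ) ^ (a + s) * (l : ℤ) ^ (n + 1 - (2 * a + s)) * NN n a s
        else 0)
      + (∑ a ∈ Finset.range (n + 2),
        if 2 * a + s ≤ n + 1 then
          (u : ℤ) ^ a * (d : ℤ) ^ (a + s) * (l : ℤ) ^ (n + 1 - (2 * a + s)) *
            NN n (a : ℤ) ((s : ℤ) - 1)
        else 0) := by
    rw [F, ← Finset.sum_add_distrib, ← Finset.sum_add_distrib]
    refine Finset.sum_congr rfl fun a _ => ?_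
    by_cases h : 2 * a + s ≤ n + 1
    · rw [if_pos h, if_pos h, if_pos h, if_pos h, NN_pascal]
      ring
    · rw [if_neg h, if_neg h, if_neg h, if_neg h]
      norm_num
  rw [key, FA, FB]
  rcases Nat.eq_zero_or_pos s with rfl | hs
  · have hz : (∑ a ∈ Finset.range (n + 2),
        if 2 * a + 0 ≤ n + 1 then
          (u : ℤ) ^ a * (d : ℤ) ^ (a + 0) * (l : ℤ) ^ (n + 1 - (2 * a + 0)) *
            NN n (a : ℤ) (((0 : ℕ) : ℤ) - 1)
        else 0) = 0 := by
      refine Finset.sum_eq_zero fun a _ => ?_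
      rw [show ((0 : ℕ) : ℤ) - 1 = -1 by norm_num, NN_neg_one]
      simp
    rw [hz, if_pos rfl, add_zero]
  · obtain ⟨s', rfl⟩ : ∃ s', s = s' + 1 := ⟨s - 1, by omega⟩
    rw [FC, if_neg (by omega)]
    norm_num


section FirstStep

lemma cons_sum (n : ℕ) (x : Fin 3) (g : Fin n → Fin 3) :
    (∑ i : Fin (n + 1), (((Fin.cons x g : Fin (n + 1) → Fin 3) i : ℤ) - 1))
      = ((x : ℤ) - 1) + ∑ i : Fin n, ((g i : ℤ) - 1) := by
  rw [Fin.sum_univ_succ]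
  simp [Fin.cons_succ]

lemma cons_prefix (n : ℕ) (x : Fin 3) (g : Fin n → Fin 3) (k : Fin (n + 1)) :
    (∑ i : Fin (n + 1),
        if (i : ℕ) < ((k.succ : Fin (n + 2)) : ℕ) then
          ((Fin.cons x g : Fin (n + 1) → Fin 3) i : ℤ) - 1 else 0)
      = ((x : ℤ) - 1) + ∑ i : Fin n, if (i : ℕ) < (k : ℕ) then ((g i : ℤ) - 1) else 0 := by
  rw [Fin.sum_univ_succ]
  congr 1
  · simp

lemma cond_cons (s n : ℕ) (x : Fin 3) (g : Fin n → Fin 3) :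
    (∀ k : Fin (n + 1 + 1),
        0 ≤ (s : ℤ) + ∑ i : Fin (n + 1),
          if (i : ℕ) < (k : ℕ) then ((Fin.cons x g : Fin (n + 1) → Fin 3) i : ℤ) - 1 else 0)
    ↔ ∀ k : Fin (n + 1),
        0 ≤ ((s : ℤ) + ((x : ℤ) - 1)) +
          ∑ i : Fin n, if (i : ℕ) < (k : ℕ) then ((g i : ℤ) - 1) else 0 := by
  rw [Fin.forall_fin_succ]
  constructor
  · rintro ⟨-, h⟩ k
    have h2 := h k
    rw [cons_prefix] at h2
    linarith
  · intro h
    constructor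
    · have : ∀ i : Fin (n + 1), (if (i : ℕ) < ((0 : Fin (n + 1 + 1)) : ℕ) then
          ((Fin.cons x g : Fin (n + 1) → Fin 3) i : ℤ) - 1 else 0) = 0 := by
        intro i; rw [if_neg]; simp
      rw [Finset.sum_congr rfl fun i _ => this i, Finset.sum_const_zero, add_zero]
      positivity
    · intro k
      rw [cons_prefix]
      have h2 := h k
      linarith

lemma inner_sum (u l d : ℕ) (n : ℕ) (x : Fin 3) (s s' : ℕ)
    (hx : (s' : ℤ) = (s : ℤ) + ((x : ℤ) - 1)) :
    (∑ g : Fin n → Fin 3,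
      if (∀ k : Fin (n + 1 + 1),
            0 ≤ (s : ℤ) + ∑ i : Fin (n + 1),
              if (i : ℕ) < (k : ℕ) then ((Fin.cons x g : Fin (n + 1) → Fin 3) i : ℤ) - 1 else 0) ∧
          (s : ℤ) + (∑ i : Fin (n + 1), (((Fin.cons x g : Fin (n + 1) → Fin 3) i : ℤ) - 1)) = 0
      then ∏ i : Fin (n + 1),
        stepWeight (fun _ => u) l (fun _ => d) (((Fin.cons x g : Fin (n + 1) → Fin 3) i : ℤ) - 1)
      else 0)
    = stepWeight (fun _ => u) l (fun _ => d) ((x : ℤ) - 1) *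
        motzkinCount 1 (fun _ => u) l (fun _ => d) s' 0 n := by
  rw [motzkinCount, Finset.mul_sum]
  simp only [Nat.cast_one, Nat.cast_zero, hx]
  refine Finset.sum_congr rfl fun g _ => ?_
  rw [mul_ite, mul_zero]
  refine if_congr (and_congr (cond_cons s n x g) ?_) ?_ rfl
  · rw [cons_sum]
    constructor <;> intro h <;> linarith
  · rw [Fin.prod_univ_succ]
    simp only [Fin.cons_succ, Fin.cons_zero]

lemma inner_sum_dead (u l d : ℕ) (n : ℕ) :
    (∑ g : Fin n → Fin 3,
      if (∀ k : Fin (n + 1 + 1),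
            0 ≤ ((0 : ℕ) : ℤ) + ∑ i : Fin (n + 1),
              if (i : ℕ) < (k : ℕ) then
                ((Fin.cons (0 : Fin 3) g : Fin (n + 1) → Fin 3) i : ℤ) - 1 else 0) ∧
          ((0 : ℕ) : ℤ) +
            (∑ i : Fin (n + 1), (((Fin.cons (0 : Fin 3) g : Fin (n + 1) → Fin 3) i : ℤ) - 1)) = 0
      then ∏ i : Fin (n + 1),
        stepWeight (fun _ => u) l (fun _ => d)
          (((Fin.cons (0 : Fin 3) g : Fin (n + 1) → Fin 3) i : ℤ) - 1)
      else 0) = 0 := by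
  refine Finset.sum_eq_zero fun g _ => ?_
  rw [if_neg]
  rintro ⟨h1, -⟩
  have h2 := h1 (0 : Fin (n + 1)).succ
  rw [cons_prefix] at h2
  have : ∀ i : Fin n, (if (i : ℕ) < ((0 : Fin (n + 1)) : ℕ) then ((g i : ℤ) - 1) else 0) = 0 := by
    intro i; rw [if_neg]; simp
  rw [Finset.sum_congr rfl fun i _ => this i, Finset.sum_const_zero] at h2
  norm_num at h2

lemma mc_step (u l d s n : ℕ) :
    motzkinCount 1 (fun _ => u) l (fun _ => d) s 0 (n + 1)
      = u * motzkinCount 1 (fun _ => u) l (fun _ => d) (s + 1) 0 n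
        + l * motzkinCount 1 (fun _ => u) l (fun _ => d) s 0 n
        + (if s = 0 then 0
            else d * motzkinCount 1 (fun _ => u) l (fun _ => d) (s - 1) 0 n) := by
  rw [motzkinCount]
  simp only [Nat.cast_one, Nat.cast_zero]
  rw [← (Fin.consEquiv (fun _ : Fin (n + 1) => Fin 3)).sum_comp, Fintype.sum_prod_type,
    Fin.sum_univ_three]
  simp only [Fin.consEquiv_apply]
  rw [inner_sum u l d n 2 s (s + 1) (by push_cast; norm_num [show ((2 : Fin 3) : ℕ) = 2 from rfl]),
    inner_sum u l d n 1 s s (by norm_num [show ((1 : Fin 3) : ℕ) = 1 from rfl])]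
  rcases Nat.eq_zero_or_pos s with rfl | hs
  · rw [inner_sum_dead u l d n, if_pos rfl]
    norm_num [stepWeight]
    ring
  · rw [inner_sum u l d n 0 s (s - 1)
      (by rw [show ((0 : Fin 3) : ℤ) = 0 from rfl]; push_cast [Nat.cast_sub hs]; omega),
      if_neg (by omega)]
    norm_num [stepWeight]
    ring

end FirstStep

lemma mc_eq_F (u l d : ℕ) : ∀ n s : ℕ,
    (motzkinCount 1 (fun _ => u) l (fun _ => d) s 0 n : ℤ) = F u l d s n := by
  intro n
  induction n with
  | zero =>
    intro s
    rw [motzkinCount, F]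
    rcases Nat.eq_zero_or_pos s with rfl | hs
    · simp [NN, tri]
    · simp [NN, tri, if_neg (by omega : ¬ 2 * 0 + s ≤ 0)]
      omega
  | succ n ih =>
    intro s
    rw [mc_step, F_succ]
    push_cast [apply_ite (fun x : ℕ => (x : ℤ))]
    rw [ih, ih]
    rcases Nat.eq_zero_or_pos s with rfl | hs
    · norm_num
    · rw [if_neg (by omega), if_neg (by omega), ih]

lemma NN_a0 (n : ℕ) : NN n 0 0 = 1 := by
  norm_num [NN, tri]

lemma NN_cast (n a : ℕ) (h : 2 * a ≤ n) :
    ((NN n (a : ℤ) 0 : ℤ) : ℚ)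
      = (n ! : ℚ) / ((a ! : ℚ) * ((a + 1)! : ℚ) * ((n - 2 * a)! : ℚ)) := by
  have hfn : ((n ! : ℕ) : ℚ) ≠ 0 := Nat.cast_ne_zero.mpr n.factorial_ne_zero
  rcases Nat.eq_zero_or_pos a with rfl | ha
  · rw [show ((0:ℕ):ℤ) = 0 from rfl, NN_a0]
    simp [Nat.factorial]
    rw [div_self hfn]
  obtain ⟨b, rfl⟩ : ∃ b, a = b + 1 := ⟨a - 1, by omega⟩
  obtain ⟨c, hc⟩ : ∃ c, n = 2 * (b + 1) + c := ⟨n - 2 * (b + 1), by omega⟩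
  subst hc
  rw [NN, show ((b+1:ℕ):ℤ) + 0 = ((b+1:ℕ):ℤ) by ring,
    show ((b+1:ℕ):ℤ) - 1 = ((b:ℕ):ℤ) by push_cast; ring,
    show ((b+1:ℕ):ℤ) + 1 = ((b+2:ℕ):ℤ) by push_cast; ring,
    tri_nat, tri_nat]
  rw [show 2 * (b+1) + c - (b+1) = b + c + 1 by omega,
    show 2 * (b+1) + c - b = b + c + 2 by omega,
    show 2 * (b+1) + c - 2 * (b+1) = c by omega]
  push_cast
  rw [Nat.cast_choose ℚ (show b + 1 ≤ 2*(b+1)+c by omega),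
    Nat.cast_choose ℚ (show b + 1 ≤ b + c + 1 by omega),
    Nat.cast_choose ℚ (show b ≤ 2*(b+1)+c by omega),
    Nat.cast_choose ℚ (show b + 2 ≤ b + c + 2 by omega)]
  rw [show 2*(b+1)+c - (b+1) = b + c + 1 by omega,
    show b + c + 1 - (b+1) = c by omega,
    show 2*(b+1)+c - b = b + c + 2 by omega,
    show b + c + 2 - (b+2) = c by omega]
  have e1 : ((b+1)! : ℚ) = (b+1) * (b ! : ℚ) := by
    rw [Nat.factorial_succ]; push_cast; ring
  have e2 : ((b+1+1)! : ℚ) = (b+2) * ((b+1)! : ℚ) := by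
    rw [Nat.factorial_succ]; push_cast; ring
  have e3 : ((b+2)! : ℚ) = (b+2) * ((b+1)! : ℚ) := by
    rw [show b+2 = b+1+1 from rfl, Nat.factorial_succ]; push_cast; ring
  rw [e2, e1]
  have hb0 : (b ! : ℚ) ≠ 0 := Nat.cast_ne_zero.mpr b.factorial_ne_zero
  have hc0 : (c ! : ℚ) ≠ 0 := Nat.cast_ne_zero.mpr c.factorial_ne_zero
  have hbc1 : ((b+c+1)! : ℚ) ≠ 0 := Nat.cast_ne_zero.mpr (b+c+1).factorial_ne_zero
  have hbc2 : ((b+c+2)! : ℚ) ≠ 0 := Nat.cast_ne_zero.mpr (b+c+2).factorial_ne_zero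
  have hb1 : ((b:ℚ)+1) ≠ 0 := by positivity
  have hb2 : ((b:ℚ)+2) ≠ 0 := by positivity
  field_simp
  ring


lemma key (m a : ℕ) :
    ((m : ℤ) + 4) * NN (m + 2) (a : ℤ) 0
      = (2 * (m : ℤ) + 5) * NN (m + 1) (a : ℤ) 0
        + 4 * ((m : ℤ) + 1) * NN m ((a : ℤ) - 1) 0
        - ((m : ℤ) + 1) * NN m (a : ℤ) 0 := by
  rcases Nat.eq_zero_or_pos a with rfl | ha
  · rw [show ((0:ℕ):ℤ) = 0 from rfl, NN_a0, NN_a0, NN_a0,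
      NN_of_neg_left (show (0:ℤ) - 1 < 0 by norm_num)]
    ring
  obtain ⟨b, rfl⟩ : ∃ b, a = b + 1 := ⟨a - 1, by omega⟩
  rw [show ((b + 1 : ℕ) : ℤ) - 1 = ((b : ℕ) : ℤ) by push_cast; ring]
  rcases lt_or_ge (m + 2) (2 * (b + 1)) with hcase | hcase
  · rw [NN_eq_zero (by push_cast; omega), NN_eq_zero (by push_cast; omega),
      NN_eq_zero (by push_cast; omega), NN_eq_zero (by push_cast; omega)]
    ring
  rcases le_or_gt (2 * (b + 1)) m with h2 | h2
  · -- generic case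
    obtain ⟨c, hc⟩ : ∃ c, m = 2 * (b + 1) + c := ⟨m - 2 * (b + 1), by omega⟩
    subst hc
    qify
    rw [show ((b:ℤ) + 1) = ((b + 1 : ℕ) : ℤ) by push_cast; ring]
    rw [NN_cast (2 * (b + 1) + c + 2) (b + 1) (by omega),
      NN_cast (2 * (b + 1) + c + 1) (b + 1) (by omega),
      NN_cast (2 * (b + 1) + c) b (by omega),
      NN_cast (2 * (b + 1) + c) (b + 1) (by omega)]
    rw [show 2 * (b + 1) + c + 2 - 2 * (b + 1) = c + 2 by omega,
      show 2 * (b + 1) + c + 1 - 2 * (b + 1) = c + 1 by omega,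
      show 2 * (b + 1) + c - 2 * b = c + 2 by omega,
      show 2 * (b + 1) + c - 2 * (b + 1) = c by omega]
    have e1 : ((b + 1)! : ℚ) = (b + 1) * (b ! : ℚ) := by
      rw [Nat.factorial_succ]; push_cast; ring
    have e2 : ((b + 1 + 1)! : ℚ) = (b + 2) * ((b + 1)! : ℚ) := by
      rw [Nat.factorial_succ]; push_cast; ring
    have f1 : ((c + 1)! : ℚ) = (c + 1) * (c ! : ℚ) := by
      rw [Nat.factorial_succ]; push_cast; ring
    have f2 : ((c + 2)! : ℚ) = (c + 2) * ((c + 1)! : ℚ) := by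
      rw [show c + 2 = c + 1 + 1 from rfl, Nat.factorial_succ]; push_cast; ring
    have g1 : ((2 * (b + 1) + c + 1)! : ℚ) = (2 * (b + 1) + c + 1) * ((2 * (b + 1) + c)! : ℚ) := by
      rw [Nat.factorial_succ]; push_cast; ring
    have g2 : ((2 * (b + 1) + c + 2)! : ℚ)
        = (2 * (b + 1) + c + 2) * ((2 * (b + 1) + c + 1)! : ℚ) := by
      rw [show 2 * (b + 1) + c + 2 = 2 * (b + 1) + c + 1 + 1 from rfl, Nat.factorial_succ]
      push_cast; ring
    rw [g2, g1, f2, f1, e2, e1]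
    have hb0 : (b ! : ℚ) ≠ 0 := Nat.cast_ne_zero.mpr b.factorial_ne_zero
    have hc0 : (c ! : ℚ) ≠ 0 := Nat.cast_ne_zero.mpr c.factorial_ne_zero
    have hm0 : (((2 * (b + 1) + c)!) : ℚ) ≠ 0 :=
      Nat.cast_ne_zero.mpr (2 * (b + 1) + c).factorial_ne_zero
    have hb1 : ((b : ℚ) + 1) ≠ 0 := by positivity
    have hb2 : ((b : ℚ) + 2) ≠ 0 := by positivity
    have hc1 : ((c : ℚ) + 1) ≠ 0 := by positivity
    have hc2 : ((c : ℚ) + 2) ≠ 0 := by positivity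
    push_cast
    field_simp
    ring
  rcases (by omega : 2 * (b + 1) = m + 1 ∨ 2 * (b + 1) = m + 2) with h3 | h3
  · -- m = 2b + 1
    obtain rfl : m = 2 * b + 1 := by omega
    qify
    rw [NN_eq_zero (show ((2 * b + 1 : ℕ) : ℤ) < 2 * ((b : ℤ) + 1) + 0 by push_cast; omega)]
    rw [show ((b:ℤ) + 1) = ((b + 1 : ℕ) : ℤ) by push_cast; ring]
    rw [NN_cast (2 * b + 1 + 2) (b + 1) (by omega),
      NN_cast (2 * b + 1 + 1) (b + 1) (by omega),
      NN_cast (2 * b + 1) b (by omega)]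
    rw [show 2 * b + 1 + 2 - 2 * (b + 1) = 1 by omega,
      show 2 * b + 1 + 1 - 2 * (b + 1) = 0 by omega,
      show 2 * b + 1 - 2 * b = 1 by omega]
    have e1 : ((b + 1)! : ℚ) = (b + 1) * (b ! : ℚ) := by
      rw [Nat.factorial_succ]; push_cast; ring
    have e2 : ((b + 1 + 1)! : ℚ) = (b + 2) * ((b + 1)! : ℚ) := by
      rw [Nat.factorial_succ]; push_cast; ring
    have g1 : ((2 * b + 1 + 1)! : ℚ) = (2 * b + 2) * ((2 * b + 1)! : ℚ) := by
      rw [Nat.factorial_succ]; push_cast; ring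
    have g2 : ((2 * b + 1 + 2)! : ℚ) = (2 * b + 3) * ((2 * b + 1 + 1)! : ℚ) := by
      rw [show 2 * b + 1 + 2 = 2 * b + 1 + 1 + 1 from rfl, Nat.factorial_succ]; push_cast; ring
    rw [g2, g1, e2, e1]
    have hb0 : (b ! : ℚ) ≠ 0 := Nat.cast_ne_zero.mpr b.factorial_ne_zero
    have hm0 : (((2 * b + 1)!) : ℚ) ≠ 0 := Nat.cast_ne_zero.mpr (2 * b + 1).factorial_ne_zero
    have hb1 : ((b : ℚ) + 1) ≠ 0 := by positivity
    have hb2 : ((b : ℚ) + 2) ≠ 0 := by positivity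
    simp only [Nat.factorial_zero, Nat.factorial_one, Nat.cast_one]
    push_cast
    field_simp
    ring
  · -- m = 2b
    obtain rfl : m = 2 * b := by omega
    qify
    rw [NN_eq_zero (show ((2 * b + 1 : ℕ) : ℤ) < 2 * ((b : ℤ) + 1) + 0 by push_cast; omega),
      NN_eq_zero (show ((2 * b : ℕ) : ℤ) < 2 * ((b : ℤ) + 1) + 0 by push_cast; omega)]
    rw [show ((b:ℤ) + 1) = ((b + 1 : ℕ) : ℤ) by push_cast; ring]
    rw [NN_cast (2 * b + 2) (b + 1) (by omega), NN_cast (2 * b) b (by omega)]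
    rw [show 2 * b + 2 - 2 * (b + 1) = 0 by omega, show 2 * b - 2 * b = 0 by omega]
    have e1 : ((b + 1)! : ℚ) = (b + 1) * (b ! : ℚ) := by
      rw [Nat.factorial_succ]; push_cast; ring
    have e2 : ((b + 1 + 1)! : ℚ) = (b + 2) * ((b + 1)! : ℚ) := by
      rw [Nat.factorial_succ]; push_cast; ring
    have g1 : ((2 * b + 1)! : ℚ) = (2 * b + 1) * ((2 * b)! : ℚ) := by
      rw [Nat.factorial_succ]; push_cast; ring
    have g2 : ((2 * b + 2)! : ℚ) = (2 * b + 2) * ((2 * b + 1)! : ℚ) := by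
      rw [show 2 * b + 2 = 2 * b + 1 + 1 from rfl, Nat.factorial_succ]; push_cast; ring
    rw [g2, g1, e2, e1]
    have hb0 : (b ! : ℚ) ≠ 0 := Nat.cast_ne_zero.mpr b.factorial_ne_zero
    have hm0 : (((2 * b)!) : ℚ) ≠ 0 := Nat.cast_ne_zero.mpr (2 * b).factorial_ne_zero
    have hb1 : ((b : ℚ) + 1) ≠ 0 := by positivity
    have hb2 : ((b : ℚ) + 2) ≠ 0 := by positivity
    simp only [Nat.factorial_zero, Nat.cast_one]
    push_cast
    field_simp
    ring

/-- The common monomial. -/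
def Mon (u l d m a : ℕ) : ℤ := (u : ℤ) ^ a * (d : ℤ) ^ a * (l : ℤ) ^ (m + 2 - 2 * a)

lemma sumA (m : ℕ) :
    F u l d 0 (m + 2) = ∑ a ∈ Finset.range (m + 3), Mon u l d m a * NN (m + 2) (a : ℤ) 0 := by
  simp only [F, Nat.add_zero, Nat.cast_zero, Mon]
  refine Finset.sum_congr rfl fun a _ => ?_
  by_cases h : 2 * a ≤ m + 2
  · rw [if_pos h]
  · rw [if_neg h, NN_eq_zero (by push_cast; omega), mul_zero]

lemma sumB (m : ℕ) :
    (l : ℤ) * F u l d 0 (m + 1)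
      = ∑ a ∈ Finset.range (m + 3), Mon u l d m a * NN (m + 1) (a : ℤ) 0 := by
  simp only [F, Nat.add_zero, Nat.cast_zero, Mon, Finset.mul_sum]
  rw [Finset.sum_range_succ (n := m + 2),
    NN_eq_zero (by push_cast; omega : ((m + 1 : ℕ) : ℤ) < 2 * ((m + 2 : ℕ) : ℤ) + 0), mul_zero,
    add_zero]
  refine Finset.sum_congr rfl fun a _ => ?_
  by_cases h : 2 * a ≤ m + 1
  · rw [if_pos h, show m + 2 - 2 * a = (m + 1 - 2 * a) + 1 by omega, pow_succ]
    ring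
  · rw [if_neg h, NN_eq_zero (by push_cast; omega), mul_zero, mul_zero]

lemma sumC (m : ℕ) :
    (l : ℤ) ^ 2 * F u l d 0 m
      = ∑ a ∈ Finset.range (m + 3), Mon u l d m a * NN m (a : ℤ) 0 := by
  simp only [F, Nat.add_zero, Nat.cast_zero, Mon, Finset.mul_sum]
  rw [Finset.sum_range_succ (n := m + 2),
    NN_eq_zero (by push_cast; omega : ((m : ℕ) : ℤ) < 2 * ((m + 2 : ℕ) : ℤ) + 0), mul_zero,
    add_zero,
    Finset.sum_range_succ (n := m + 1),
    NN_eq_zero (by push_cast; omega : ((m : ℕ) : ℤ) < 2 * ((m + 1 : ℕ) : ℤ) + 0), mul_zero,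
    add_zero]
  refine Finset.sum_congr rfl fun a _ => ?_
  by_cases h : 2 * a ≤ m
  · rw [if_pos h, show m + 2 - 2 * a = (m - 2 * a) + 2 by omega, pow_add]
    ring
  · rw [if_neg h, NN_eq_zero (by push_cast; omega), mul_zero, mul_zero]

lemma sumD (m : ℕ) :
    (u : ℤ) * (d : ℤ) * F u l d 0 m
      = ∑ a ∈ Finset.range (m + 3), Mon u l d m a * NN m ((a : ℤ) - 1) 0 := by
  simp only [F, Nat.add_zero, Nat.cast_zero, Mon, Finset.mul_sum]
  rw [Finset.sum_range_succ' (f := fun a => (u : ℤ) ^ a * (d : ℤ) ^ a *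
      (l : ℤ) ^ (m + 2 - 2 * a) * NN m ((a : ℤ) - 1) 0) (n := m + 2),
    NN_of_neg_left (show ((0 : ℕ) : ℤ) - 1 < 0 by norm_num), mul_zero, add_zero,
    Finset.sum_range_succ (n := m + 1),
    show ((m + 1 + 1 : ℕ) : ℤ) - 1 = ((m + 1 : ℕ) : ℤ) by push_cast; ring,
    NN_eq_zero (by push_cast; omega : ((m : ℕ) : ℤ) < 2 * ((m + 1 : ℕ) : ℤ) + 0), mul_zero,
    add_zero]
  refine Finset.sum_congr rfl fun a _ => ?_
  rw [show ((a + 1 : ℕ) : ℤ) - 1 = ((a : ℕ) : ℤ) by push_cast; ring]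
  by_cases h : 2 * a ≤ m
  · rw [if_pos h, show m + 2 - 2 * (a + 1) = m - 2 * a by omega, pow_succ, pow_succ]
    ring
  · rw [if_neg h, NN_eq_zero (by push_cast; omega), mul_zero, mul_zero]

lemma final (m : ℕ) :
    ((m : ℤ) + 4) * F u l d 0 (m + 2)
      = (l : ℤ) * (2 * (m : ℤ) + 5) * F u l d 0 (m + 1)
        + (4 * (u : ℤ) * (d : ℤ) - (l : ℤ) ^ 2) * ((m : ℤ) + 1) * F u l d 0 m := by
  have expand : (l : ℤ) * (2 * (m : ℤ) + 5) * F u l d 0 (m + 1)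
        + (4 * (u : ℤ) * (d : ℤ) - (l : ℤ) ^ 2) * ((m : ℤ) + 1) * F u l d 0 m
      = (2 * (m : ℤ) + 5) * ((l : ℤ) * F u l d 0 (m + 1))
        + 4 * ((m : ℤ) + 1) * ((u : ℤ) * (d : ℤ) * F u l d 0 m)
        - ((m : ℤ) + 1) * ((l : ℤ) ^ 2 * F u l d 0 m) := by ring
  rw [expand, sumA, sumB, sumC, sumD, Finset.mul_sum, Finset.mul_sum, Finset.mul_sum,
    Finset.mul_sum, ← Finset.sum_add_distrib, ← Finset.sum_sub_distrib]
  refine Finset.sum_congr rfl fun a _ => ?_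
  have h1 : ((m : ℤ) + 4) * (Mon u l d m a * NN (m + 2) (a : ℤ) 0)
      = Mon u l d m a * (((m : ℤ) + 4) * NN (m + 2) (a : ℤ) 0) := by ring
  rw [h1, key m a]
  ring


end MotzkinAux

/-- The generating function `A_{s,t}(x) = Σ_{n≥0} |𝒜_{s,t}(n)| xⁿ ∈ ℚ⟦x⟧`. -/
noncomputable def motzkinGF (r : ℕ) (u : ℕ → ℕ) (l : ℕ) (d : ℕ → ℕ) (s t : ℕ) :
    PowerSeries ℚ :=
  PowerSeries.mk fun n => (motzkinCount r u l d s t n : ℚ)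

/-- `(n+2)·m_n^{(u,l,d)} = l·(2n+1)·m_{n-1}^{(u,l,d)} + (4ud−l²)·(n−1)·m_{n-2}^{(u,l,d)}`. -/
theorem motzkin_recursion (u l d : ℕ) (n : ℕ) (hn : 2 ≤ n) :
    ((n : ℤ) + 2) * (motzkinCount 1 (fun _ => u) l (fun _ => d) 0 0 n : ℤ) =
      (l : ℤ) * (2 * (n : ℤ) + 1) * (motzkinCount 1 (fun _ => u) l (fun _ => d) 0 0 (n - 1) : ℤ)
        + (4 * (u : ℤ) * (d : ℤ) - (l : ℤ) ^ 2) * ((n : ℤ) - 1) *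
            (motzkinCount 1 (fun _ => u) l (fun _ => d) 0 0 (n - 2) : ℤ) := by
  obtain ⟨m, rfl⟩ : ∃ m, n = m + 2 := ⟨n - 2, by omega⟩
  rw [show m + 2 - 1 = m + 1 from rfl, show m + 2 - 2 = m from rfl,
    MotzkinAux.mc_eq_F, MotzkinAux.mc_eq_F, MotzkinAux.mc_eq_F]
  have h := MotzkinAux.final u l d m
  push_cast
  push_cast at h
  linarith [h]
end

section
/- For all natural numbers u, l, d, the generating function M(x) = Σ_{n≥0} m_n^{(u,l,d)} x^n ∈ ℚ⟦x⟧ satisfies the functional equation M(x) = 1 + l·x·M(x) + u·d·x²·M(x)². -/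
open PowerSeries Finset

section
variable (u l d : ℕ)

lemma cons_sum (n : ℕ) (z : Fin 3) (g : Fin n → Fin 3) (k : Fin (n+1)) :
    (∑ i : Fin (n+1), if (i : ℕ) < (k.succ : ℕ) then (((Fin.cons (α := fun _ => Fin 3) z g i : Fin 3) : ℤ) - 1) else 0)
      = ((z : ℤ) - 1) + ∑ i : Fin n, if (i : ℕ) < (k : ℕ) then ((g i : ℤ) - 1) else 0 := by
  rw [Fin.sum_univ_succ]
  simp [Nat.succ_lt_succ_iff]

lemma cons_cond (n s : ℕ) (z : Fin 3) (g : Fin n → Fin 3) :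
    ((∀ k : Fin (n + 2),
          0 ≤ (s : ℤ) + ∑ i : Fin (n+1), if (i : ℕ) < (k : ℕ) then (((Fin.cons (α := fun _ => Fin 3) z g i : Fin 3) : ℤ) - 1) else 0) ∧
        (s : ℤ) + (∑ i : Fin (n+1), (((Fin.cons (α := fun _ => Fin 3) z g i : Fin 3) : ℤ) - 1)) = 0)
    ↔ ((∀ k : Fin (n + 1),
          0 ≤ ((s : ℤ) + ((z:ℤ)-1)) + ∑ i : Fin n, if (i : ℕ) < (k : ℕ) then ((g i : ℤ) - 1) else 0) ∧
        ((s : ℤ) + ((z:ℤ)-1)) + (∑ i : Fin n, ((g i : ℤ) - 1)) = 0) := by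
  rw [Fin.forall_fin_succ]
  have htot : (∑ i : Fin (n+1), (((Fin.cons (α := fun _ => Fin 3) z g i : Fin 3) : ℤ) - 1))
      = ((z:ℤ)-1) + ∑ i : Fin n, ((g i : ℤ) - 1) := by
    rw [Fin.sum_univ_succ]
    simp only [Fin.cons_zero, Fin.cons_succ]
  constructor
  · rintro ⟨⟨-, h1⟩, h2⟩
    refine ⟨fun k => ?_, ?_⟩
    · have := h1 k; rw [cons_sum] at this; linarith
    · rw [htot] at h2; linarith
  · rintro ⟨h1, h2⟩
    refine ⟨⟨by simp, fun k => ?_⟩, ?_⟩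
    · rw [cons_sum]; have := h1 k; linarith
    · rw [htot]; linarith

lemma cons_prod (n : ℕ) (z : Fin 3) (g : Fin n → Fin 3) :
    (∏ i : Fin (n+1), stepWeight (fun _ => u) l (fun _ => d) (((Fin.cons (α := fun _ => Fin 3) z g i : Fin 3) : ℤ) - 1))
    = stepWeight (fun _ => u) l (fun _ => d) ((z:ℤ)-1)
      * ∏ i : Fin n, stepWeight (fun _ => u) l (fun _ => d) ((g i : ℤ) - 1) := by
  rw [Fin.prod_univ_succ]; simp

lemma innerSum (n s : ℕ) (z : Fin 3) (s' : ℕ) (h : (s:ℤ) + ((z:ℤ)-1) = (s' : ℤ)) :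
    (∑ g : Fin n → Fin 3,
      if ((∀ k : Fin (n + 2),
          0 ≤ (s : ℤ) + ∑ i : Fin (n+1), if (i : ℕ) < (k : ℕ) then (((Fin.cons (α := fun _ => Fin 3) z g i : Fin 3) : ℤ) - 1) else 0) ∧
        (s : ℤ) + (∑ i : Fin (n+1), (((Fin.cons (α := fun _ => Fin 3) z g i : Fin 3) : ℤ) - 1)) = 0)
      then ∏ i : Fin (n+1), stepWeight (fun _ => u) l (fun _ => d) (((Fin.cons (α := fun _ => Fin 3) z g i : Fin 3) : ℤ) - 1)
      else 0)
    = stepWeight (fun _ => u) l (fun _ => d) ((z:ℤ)-1)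
        * motzkinCount 1 (fun _ => u) l (fun _ => d) s' 0 n := by
  rw [motzkinCount, Finset.mul_sum]
  refine Finset.sum_congr rfl fun g _ => ?_
  rw [cons_prod, mul_ite, mul_zero]
  refine if_congr ?_ rfl rfl
  rw [cons_cond, h]
  norm_num

lemma innerSum_neg (n : ℕ) (z : Fin 3) (h : (0:ℤ) + ((z:ℤ)-1) < 0) :
    (∑ g : Fin n → Fin 3,
      if ((∀ k : Fin (n + 2),
          0 ≤ ((0:ℕ) : ℤ) + ∑ i : Fin (n+1), if (i : ℕ) < (k : ℕ) then (((Fin.cons (α := fun _ => Fin 3) z g i : Fin 3) : ℤ) - 1) else 0) ∧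
        ((0:ℕ) : ℤ) + (∑ i : Fin (n+1), (((Fin.cons (α := fun _ => Fin 3) z g i : Fin 3) : ℤ) - 1)) = 0)
      then ∏ i : Fin (n+1), stepWeight (fun _ => u) l (fun _ => d) (((Fin.cons (α := fun _ => Fin 3) z g i : Fin 3) : ℤ) - 1)
      else 0) = 0 := by
  refine Finset.sum_eq_zero fun g _ => ?_
  rw [if_neg]
  rw [cons_cond]
  rintro ⟨h1, -⟩
  have := h1 0
  simp at this
  omega

lemma mc_succ (s n : ℕ) :
    motzkinCount 1 (fun _ => u) l (fun _ => d) s 0 (n+1) =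
      u * motzkinCount 1 (fun _ => u) l (fun _ => d) (s+1) 0 n
      + l * motzkinCount 1 (fun _ => u) l (fun _ => d) s 0 n
      + (if s = 0 then 0 else d * motzkinCount 1 (fun _ => u) l (fun _ => d) (s-1) 0 n) := by
  rw [motzkinCount]
  rw [← (Fin.consEquiv (fun _ : Fin (n+1) => Fin 3)).sum_comp]
  rw [Fintype.sum_prod_type]
  rw [Fin.sum_univ_three]
  simp only [Fin.consEquiv_apply, Nat.cast_one, Nat.cast_zero]
  have e1 : ((1 : Fin 3):ℤ) = 1 := by decide
  have e2 : ((2 : Fin 3):ℤ) = 2 := by decide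
  have e0 : ((0 : Fin 3):ℤ) = 0 := by decide
  have h1 : ((s:ℤ) + (((1 : Fin 3):ℤ)-1)) = (s : ℤ) := by rw [e1]; ring
  have h2 : ((s:ℤ) + (((2 : Fin 3):ℤ)-1)) = ((s+1 : ℕ) : ℤ) := by rw [e2]; push_cast; ring
  rw [innerSum u l d n s 1 s h1, innerSum u l d n s 2 (s+1) h2]
  by_cases hs : s = 0
  · subst hs
    rw [innerSum_neg u l d n 0 (by rw [e0]; norm_num)]
    norm_num [stepWeight]
    ring
  · have h0 : ((s:ℤ) + (((0 : Fin 3):ℤ)-1)) = ((s - 1 : ℕ) : ℤ) := by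
      have : 1 ≤ s := Nat.one_le_iff_ne_zero.mpr hs
      rw [e0]
      push_cast [this]
      ring
    rw [innerSum u l d n s 0 (s-1) h0]
    simp only [if_neg hs]
    norm_num [stepWeight]
    ring
end

def mz (u l d : ℕ) : ℕ → ℕ → ℕ
  | 0, s => if s = 0 then 1 else 0
  | n+1, s => u * mz u l d n (s+1) + l * mz u l d n s +
      (if s = 0 then 0 else d * mz u l d n (s-1))

section
variable (u l d : ℕ)

noncomputable def Cps (s : ℕ) : PowerSeries ℚ := PowerSeries.mk fun n => (mz u l d n s : ℚ)

lemma coeff_Cps (s n : ℕ) : coeff n (Cps u l d s) = (mz u l d n s : ℚ) := coeff_mk _ _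

lemma trunc_mul_congr {A B P : PowerSeries ℚ} {k : ℕ}
    (h : ∀ j ≤ k, coeff j A = coeff j B) : coeff k (P * A) = coeff k (P * B) := by
  rw [coeff_mul, coeff_mul]
  refine Finset.sum_congr rfl fun p hp => ?_
  rw [Finset.HasAntidiagonal.mem_antidiagonal] at hp
  rw [h p.2 (by omega)]

lemma key : ∀ n s, coeff n (Cps u l d (s+1))
    = coeff n (C (d:ℚ) * (X * Cps u l d 0 * Cps u l d s)) := by
  intro n
  induction n using Nat.strong_induction_on with
  | _ n IH =>
  intro s
  match n with
  | 0 =>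
    simp [coeff_Cps, mz, coeff_zero_eq_constantCoeff]
  | (k+1) =>
    -- auxiliary: coefficients of M agree with 1 + lXM + udX²M² up to k
    have hM : ∀ j ≤ k, coeff j (Cps u l d 0)
        = coeff j (1 + C (l:ℚ) * (X * Cps u l d 0)
            + C ((u:ℚ)*(d:ℚ)) * (X * (X * (Cps u l d 0 * Cps u l d 0)))) := by
      intro j hj
      match j with
      | 0 =>
        simp [coeff_Cps, mz, coeff_zero_eq_constantCoeff]
      | (i+1) =>
        rw [coeff_Cps]
        show ((mz u l d (i+1) 0 : ℕ) : ℚ) = _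
        rw [mz, if_pos rfl]
        push_cast
        rw [← coeff_Cps u l d 1 i, ← coeff_Cps u l d 0 i, IH i (by omega) 0]
        have ha : X * Cps u l d 0 * Cps u l d 0 = X * (Cps u l d 0 * Cps u l d 0) :=
          mul_assoc _ _ _
        rw [ha]
        simp only [map_add, coeff_one, coeff_C_mul, coeff_succ_X_mul]
        norm_num
        ring
    -- LHS expansion
    rw [coeff_Cps]
    show ((mz u l d (k+1) (s+1) : ℕ) : ℚ) = _
    rw [mz]
    simp only [Nat.add_sub_cancel, if_neg (Nat.succ_ne_zero s)]
    push_cast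
    rw [← coeff_Cps u l d (s+2) k, ← coeff_Cps u l d (s+1) k, ← coeff_Cps u l d s k]
    rw [IH k (by omega) (s+1), IH k (by omega) s]
    have e1 : C (d:ℚ) * (X * Cps u l d 0 * Cps u l d (s+1))
        = (C (d:ℚ) * X * Cps u l d 0) * Cps u l d (s+1) := by ring
    rw [e1]
    rw [trunc_mul_congr (fun j hj => IH j (by omega) s)]
    have e2 : C (d:ℚ) * (X * Cps u l d 0 * Cps u l d s)
        = X * ((Cps u l d s * C (d:ℚ)) * Cps u l d 0) := by ring
    rw [e2, coeff_succ_X_mul]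
    rw [trunc_mul_congr hM]
    rw [← coeff_C_mul _ _ (u:ℚ), ← coeff_C_mul _ _ (l:ℚ), ← coeff_C_mul _ _ (d:ℚ),
      ← map_add, ← map_add]
    congr 1
    simp only [map_mul]
    ring
end



lemma mc_zero (u l d s : ℕ) :
    motzkinCount 1 (fun _ => u) l (fun _ => d) s 0 0 = if s = 0 then 1 else 0 := by
  simp [motzkinCount]

lemma mc_eq_mz (u l d : ℕ) : ∀ n s,
    motzkinCount 1 (fun _ => u) l (fun _ => d) s 0 n = mz u l d n s := by
  intro n
  induction n with
  | zero => intro s; rw [mc_zero]; rfl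
  | succ n ih => intro s; rw [mc_succ, mz]; rw [ih, ih]; by_cases h : s = 0 <;> simp [h, ih]


/-- the generating function `M(x) = Σ_{n≥0} m_n^{(u,l,d)} xⁿ` satisfies
`M = 1 + l·x·M + u·d·x²·M²`. -/
theorem motzkin_gf_eq (u l d : ℕ) :
    motzkinGF 1 (fun _ => u) l (fun _ => d) 0 0 =
      1 + C (l : ℚ) * X * motzkinGF 1 (fun _ => u) l (fun _ => d) 0 0
        + C ((u : ℚ) * (d : ℚ)) * X ^ 2 * (motzkinGF 1 (fun _ => u) l (fun _ => d) 0 0) ^ 2 := by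
  have hgf : motzkinGF 1 (fun _ => u) l (fun _ => d) 0 0 = Cps u l d 0 := by
    ext n
    simp only [motzkinGF, Cps, coeff_mk, mc_eq_mz]
  rw [hgf]
  ext n
  match n with
  | 0 =>
    simp [coeff_Cps, mz, coeff_zero_eq_constantCoeff]
  | (i+1) =>
    rw [coeff_Cps]
    show ((mz u l d (i+1) 0 : ℕ) : ℚ) = _
    rw [mz, if_pos rfl]
    push_cast
    rw [← coeff_Cps u l d 1 i, ← coeff_Cps u l d 0 i, key u l d i 0]
    have ha : C ((u:ℚ) * (d:ℚ)) * X ^ 2 * Cps u l d 0 ^ 2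
        = C ((u:ℚ) * (d:ℚ)) * (X * (X * (Cps u l d 0 * Cps u l d 0))) := by ring
    have hb : C (l:ℚ) * X * Cps u l d 0 = C (l:ℚ) * (X * Cps u l d 0) := by ring
    have hc : C (d:ℚ) * (X * Cps u l d 0 * Cps u l d 0)
        = C (d:ℚ) * (X * (Cps u l d 0 * Cps u l d 0)) := by ring
    rw [ha, hb, hc]
    simp only [map_add, coeff_one, coeff_C_mul, coeff_succ_X_mul]
    norm_num
    ring
end

section
/- For all natural numbers u, l, d and all n ≥ 0, the (u,l,d)-Motzkin number has the explicit expression m_n^{(u,l,d)} = Σ_{j=0}^{⌊n/2⌋} (1/(j+1)) · C(2j, j) · C(n, 2j) · u^j · d^j · l^{n−2j}, where C(a,b) denotes the binomial coefficient. -/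
open PowerSeries Finset

/-- step value of a boolean: `true ↦ 1`, `false ↦ -1`. -/
def bstep (b : Bool) : ℤ := if b then 1 else -1

/-- prefix sum of ± steps. -/
def bpsum {m : ℕ} (g : Fin m → Bool) (k : ℕ) : ℤ :=
  ∑ i : Fin m, if (i : ℕ) < k then bstep (g i) else 0

/-- validity (ballot condition) of a ± sequence. -/
def BValid {m : ℕ} (g : Fin m → Bool) : Prop :=
  (∀ k : Fin (m + 1), 0 ≤ bpsum g (k : ℕ)) ∧ bpsum g m = 0

instance {m : ℕ} (g : Fin m → Bool) : Decidable (BValid g) := by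
  unfold BValid; infer_instance

lemma count_take_ofFn {α : Type*} [DecidableEq α] (a : α) :
    ∀ {m : ℕ} (f : Fin m → α) (k : ℕ),
      ((List.ofFn f).take k).count a =
        ∑ i : Fin m, if (i : ℕ) < k ∧ f i = a then 1 else 0 := by
  intro m
  induction m with
  | zero => intro f k; simp
  | succ m ih =>
    intro f k
    rw [List.ofFn_succ]
    cases k with
    | zero => simp
    | succ k =>
      rw [List.take_succ_cons, List.count_cons, ih (fun i => f i.succ) k,
        Fin.sum_univ_succ]
      simp only [Fin.val_succ, Fin.val_zero, Nat.zero_lt_succ, true_and,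
        Nat.succ_lt_succ_iff]
      rw [add_comm]
      congr 1
      · split_ifs with h1 h2 <;> simp_all [beq_iff_eq]

open DyckStep in
/-- the list of Dyck steps associated to a ± sequence. -/
def toSteps {m : ℕ} (g : Fin m → Bool) : List DyckStep :=
  List.ofFn (fun i => if g i then U else D)

open DyckStep in
lemma bpsum_eq_counts {m : ℕ} (g : Fin m → Bool) (k : ℕ) :
    bpsum g k = ((toSteps g).take k).count U - ((toSteps g).take k).count D := by
  rw [toSteps, count_take_ofFn, count_take_ofFn, bpsum]
  push_cast
  rw [← Finset.sum_sub_distrib]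
  refine Finset.sum_congr rfl fun i _ => ?_
  by_cases hic : (i : ℕ) < k <;> cases hg : g i <;> simp [hic, hg, bstep]

open DyckStep in
lemma length_toSteps {m : ℕ} (g : Fin m → Bool) : (toSteps g).length = m := by
  simp [toSteps]

open DyckStep in
lemma toSteps_of_dyck {m : ℕ} (p : DyckWord) (hp : p.toList.length = m) :
    toSteps (fun i : Fin m => p.toList[(i : ℕ)]'(hp ▸ i.isLt) == U) = p.toList := by
  apply List.ext_getElem (by simp [length_toSteps, hp])
  intro i h1 h2
  simp only [toSteps, List.getElem_ofFn]
  rcases (p.toList[i]'h2).dichotomy with h | h <;> simp [h]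

lemma bpsum_of_ge {m : ℕ} (g : Fin m → Bool) {k : ℕ} (hk : m ≤ k) :
    bpsum g k = bpsum g m := by
  refine Finset.sum_congr rfl fun i _ => ?_
  have := i.isLt
  rw [if_pos (by omega), if_pos (by omega)]

open DyckStep in
/-- valid ± sequences of length `m` are equivalent to Dyck words of length `m`. -/
def ballotEquiv (m : ℕ) :
    {g : Fin m → Bool // BValid g} ≃ {p : DyckWord // p.toList.length = m} where
  toFun g := ⟨⟨toSteps g.1, by
      have h2 := g.2.2
      rw [bpsum_eq_counts, List.take_of_length_le (by rw [length_toSteps])] at h2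
      omega, by
      intro i
      rcases le_or_gt i m with hi | hi
      · have h1 := g.2.1 ⟨i, by omega⟩
        rw [bpsum_eq_counts] at h1
        simp only at h1
        omega
      · rw [List.take_of_length_le (by rw [length_toSteps]; omega)]
        have h2 := g.2.2
        rw [bpsum_eq_counts, List.take_of_length_le (by rw [length_toSteps])] at h2
        omega⟩,
      length_toSteps g.1⟩
  invFun p := ⟨fun i => p.1.toList[(i : ℕ)]'(by rw [p.2]; exact i.isLt) == U, by
    constructor
    · intro k
      rw [bpsum_eq_counts, toSteps_of_dyck p.1 p.2]
      have := p.1.count_D_le_count_U (k : ℕ)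
      omega
    · rw [bpsum_eq_counts, toSteps_of_dyck p.1 p.2,
        List.take_of_length_le (le_of_eq p.2)]
      have := p.1.count_U_eq_count_D
      omega⟩
  left_inv g := by
    ext i
    simp only [toSteps, List.getElem_ofFn]
    cases h : g.1 i <;> simp [h]
  right_inv p := by
    apply Subtype.ext
    apply DyckWord.ext
    exact toSteps_of_dyck p.1 p.2

lemma card_bvalid_even (j : ℕ) :
    Fintype.card {g : Fin (2 * j) → Bool // BValid g} = catalan j := by
  rw [← DyckWord.card_dyckWord_semilength_eq_catalan]
  refine Fintype.card_congr ((ballotEquiv (2 * j)).trans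
    (Equiv.subtypeEquivRight fun p => ?_))
  rw [← p.two_mul_semilength_eq_length]
  omega

lemma bvalid_dvd {m : ℕ} (g : Fin m → Bool) (h : BValid g) : 2 ∣ m := by
  obtain ⟨p, hp⟩ := ballotEquiv m ⟨g, h⟩
  exact ⟨p.semilength, by rw [← hp, ← p.two_mul_semilength_eq_length]⟩

lemma bvalid_counts {m : ℕ} (g : Fin m → Bool) (h : BValid g) :
    (univ.filter fun i => g i = true).card = m / 2 ∧
      (univ.filter fun i => g i = false).card = m / 2 := by
  have h2 := h.2
  have e1 : bpsum g m = ∑ i : Fin m, bstep (g i) :=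
    Finset.sum_congr rfl fun i _ => if_pos i.isLt
  have e2 : ∑ i : Fin m, bstep (g i) =
      ((univ.filter fun i => g i = true).card : ℤ) -
        ((univ.filter fun i => g i = false).card : ℤ) := by
    rw [← Finset.sum_boole, ← Finset.sum_boole, ← Finset.sum_sub_distrib]
    refine Finset.sum_congr rfl fun i _ => ?_
    cases hg : g i <;> simp [bstep, hg]
  have e3 : (univ.filter fun i => g i = true).card +
      (univ.filter fun i => g i = false).card = m := by
    have := Finset.card_filter_add_card_filter_not
      (s := (univ : Finset (Fin m))) (p := fun i => g i = true)
    have e4 : (univ.filter fun i => ¬g i = true) = univ.filter fun i => g i = false := by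
      apply Finset.filter_congr; intro i _; simp
    rw [e4] at this
    simpa using this
  rw [e1, e2] at h2
  omega

lemma card_bvalid (m : ℕ) :
    (univ.filter fun g : Fin m → Bool => BValid g).card =
      if 2 ∣ m then catalan (m / 2) else 0 := by
  rw [← Fintype.card_subtype]
  split_ifs with h
  · obtain ⟨j, rfl⟩ := h
    rw [card_bvalid_even]
    congr 1
    omega
  · rw [Fintype.card_eq_zero_iff]
    exact ⟨fun g => h (bvalid_dvd g.1 g.2)⟩

lemma orderIso_lt_iff {n : ℕ} (S : Finset (Fin n)) (j : Fin S.card) (k : ℕ) :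
    ((S.orderIsoOfFin rfl j : Fin n) : ℕ) < k ↔
      (j : ℕ) < (S.filter fun i : Fin n => (i : ℕ) < k).card := by
  set e := S.orderIsoOfFin rfl with he
  constructor
  · intro h
    have hc : (Finset.Iic j).card ≤ (S.filter fun i : Fin n => (i : ℕ) < k).card := by
      apply Finset.card_le_card_of_injOn (fun i => (e i : Fin n))
      · intro i hi
        rw [Finset.mem_coe, Finset.mem_Iic] at hi
        rw [Finset.mem_coe, Finset.mem_filter]
        refine ⟨(e i).2, lt_of_le_of_lt ?_ h⟩
        exact_mod_cast Subtype.coe_le_coe.mpr (e.monotone hi)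
      · intro a _ b _ hab
        exact e.injective (Subtype.ext hab)
    rw [Fin.card_Iic] at hc
    omega
  · intro h
    by_contra hk
    push_neg at hk
    have hsub : (S.filter fun i : Fin n => (i : ℕ) < k) ⊆
        (Finset.Iio j).image (fun i => (e i : Fin n)) := by
      intro i hi
      rw [Finset.mem_filter] at hi
      rw [Finset.mem_image]
      refine ⟨e.symm ⟨i, hi.1⟩, ?_, by simp⟩
      rw [Finset.mem_Iio, ← e.lt_iff_lt, e.apply_symm_apply]
      exact Subtype.coe_lt_coe.mp (by exact_mod_cast lt_of_lt_of_le hi.2 hk)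
    have := (Finset.card_le_card hsub).trans (Finset.card_image_le)
    rw [Fin.card_Iio] at this
    omega

lemma eq_of_lt_iff {m a b : ℕ} (ha : a ≤ m) (hb : b ≤ m)
    (h : ∀ j : Fin m, (j : ℕ) < a ↔ (j : ℕ) < b) : a = b := by
  by_contra hne
  rcases Nat.lt_or_ge a b with hlt | hge
  · have := (h ⟨a, lt_of_lt_of_le hlt hb⟩).mpr hlt
    simp at this
  · have hlt : b < a := by omega
    have := (h ⟨b, lt_of_lt_of_le hlt ha⟩).mp hlt
    simp at this

lemma fin3_cases : ∀ v : Fin 3, v ≠ 1 → v = 0 ∨ v = 2 := by decide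

/-- prefix sum of a Motzkin path. -/
def msum {n : ℕ} (f : Fin n → Fin 3) (k : ℕ) : ℤ :=
  ∑ i : Fin n, if (i : ℕ) < k then ((f i : ℤ) - 1) else 0

/-- validity of a Motzkin path. -/
def MValid {n : ℕ} (f : Fin n → Fin 3) : Prop :=
  (∀ k : Fin (n + 1), 0 ≤ msum f (k : ℕ)) ∧ msum f n = 0

instance {n : ℕ} (f : Fin n → Fin 3) : Decidable (MValid f) := by
  unfold MValid; infer_instance

/-- support (set of non-level steps) of a Motzkin path. -/
def supp {n : ℕ} (f : Fin n → Fin 3) : Finset (Fin n) :=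
  univ.filter fun i => f i ≠ 1

/-- the ± sequence extracted from the non-level steps of a Motzkin path. -/
def ΦS {n : ℕ} (S : Finset (Fin n)) (f : Fin n → Fin 3) : Fin S.card → Bool :=
  fun j => decide (f (S.orderIsoOfFin rfl j) = 2)

lemma msum_eq {n : ℕ} (S : Finset (Fin n)) (f : Fin n → Fin 3) (hf : supp f = S) (k : ℕ) :
    msum f k = bpsum (ΦS S f) (S.filter fun i : Fin n => (i : ℕ) < k).card := by
  have h1 : msum f k = ∑ i ∈ S, (if (i : ℕ) < k then ((f i : ℤ) - 1) else 0) := by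
    rw [msum]
    symm
    apply Finset.sum_subset (Finset.subset_univ S)
    intro x _ hx
    have hx1 : f x = 1 := by
      by_contra hc
      exact hx (hf ▸ (by simp [supp, hc]))
    rw [hx1]
    simp
  rw [h1, ← Finset.sum_coe_sort S (fun i => if (i : ℕ) < k then ((f i : ℤ) - 1) else 0),
    ← Equiv.sum_comp (S.orderIsoOfFin rfl).toEquiv
      (fun x : ↥S => if ((x : Fin n) : ℕ) < k then ((f x : ℤ) - 1) else 0)]
  rw [bpsum]
  refine Finset.sum_congr rfl fun j _ => ?_
  show (if (((S.orderIsoOfFin rfl j : ↥S) : Fin n) : ℕ) < k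
      then ((f ((S.orderIsoOfFin rfl j : ↥S) : Fin n) : ℤ) - 1) else 0) = _
  have hcond := orderIso_lt_iff S j k
  have hmem : ((S.orderIsoOfFin rfl j : ↥S) : Fin n) ∈ S := (S.orderIsoOfFin rfl j).2
  have hne : f ((S.orderIsoOfFin rfl j : ↥S) : Fin n) ≠ 1 := by
    have h' : ((S.orderIsoOfFin rfl j : ↥S) : Fin n) ∈ supp f := hf ▸ hmem
    simpa [supp] using h'
  rcases fin3_cases _ hne with h0 | h2
  · have hb : ΦS S f j = false := by unfold ΦS; rw [h0]; decide
    exact if_congr hcond (by rw [h0, hb]; simp [bstep]) rfl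
  · have hb : ΦS S f j = true := by unfold ΦS; rw [h2]; decide
    exact if_congr hcond (by rw [h2, hb]; simp [bstep]) rfl

lemma filter_lt_n {n : ℕ} (S : Finset (Fin n)) :
    (S.filter fun i : Fin n => (i : ℕ) < n).card = S.card := by
  congr 1
  apply Finset.filter_true_of_mem
  intro i _
  exact i.isLt

lemma mvalid_iff {n : ℕ} (S : Finset (Fin n)) (f : Fin n → Fin 3) (hf : supp f = S) :
    MValid f ↔ BValid (ΦS S f) := by
  constructor
  · rintro ⟨h1, h2⟩
    refine ⟨?_, ?_⟩
    · intro c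
      rcases Nat.eq_zero_or_pos (c : ℕ) with hc | hc
      · rw [hc]
        unfold bpsum
        simp
      · have hcm : (c : ℕ) ≤ S.card := Nat.lt_succ_iff.mp c.isLt
        set j : Fin S.card := ⟨(c : ℕ) - 1, by omega⟩ with hj
        set K : ℕ := ((S.orderIsoOfFin rfl j : Fin n) : ℕ) + 1 with hK
        have hKn : K ≤ n := (S.orderIsoOfFin rfl j : Fin n).isLt
        have hval := h1 ⟨K, by omega⟩
        rw [msum_eq S f hf] at hval
        have hcard : (S.filter fun i : Fin n => (i : ℕ) < K).card = (c : ℕ) := by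
          refine eq_of_lt_iff (Finset.card_filter_le _ _) hcm fun j' => ?_
          rw [← orderIso_lt_iff]
          have hmono : ((S.orderIsoOfFin rfl j' : Fin n) : ℕ) < K ↔ (j' : ℕ) ≤ (j : ℕ) := by
            rw [hK]
            constructor
            · intro h'
              have hle : (S.orderIsoOfFin rfl j' : Fin n) ≤ (S.orderIsoOfFin rfl j : Fin n) := by
                rw [Fin.le_def]; omega
              have := (S.orderIsoOfFin rfl).le_iff_le.mp (Subtype.coe_le_coe.mp hle)
              exact this
            · intro h'
              have hle : j' ≤ j := by rw [Fin.le_def]; exact h'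
              have := Subtype.coe_le_coe.mpr ((S.orderIsoOfFin rfl).le_iff_le.mpr hle)
              rw [Fin.le_def] at this
              omega
          rw [hmono, hj]
          simp
          omega
        rw [hcard] at hval
        simpa using hval
    · have hval := h2
      rw [msum_eq S f hf n, filter_lt_n] at hval
      exact hval
  · rintro ⟨h1, h2⟩
    refine ⟨?_, ?_⟩
    · intro k
      rw [msum_eq S f hf]
      have hc : (S.filter fun i : Fin n => (i : ℕ) < (k : ℕ)).card ≤ S.card :=
        Finset.card_filter_le _ _
      exact h1 ⟨_, Nat.lt_succ_of_le hc⟩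
    · rw [msum_eq S f hf n, filter_lt_n]
      exact h2

lemma weight_eq {n : ℕ} (u l d : ℕ) (S : Finset (Fin n)) (f : Fin n → Fin 3)
    (hf : supp f = S) :
    (∏ i : Fin n, stepWeight (fun _ => u) l (fun _ => d) ((f i : ℤ) - 1)) =
      u ^ (univ.filter fun j => ΦS S f j = true).card *
        d ^ (univ.filter fun j => ΦS S f j = false).card * l ^ (n - S.card) := by
  rw [← Finset.prod_filter_mul_prod_filter_not univ (fun i => f i ≠ 1)]
  have hS : univ.filter (fun i => f i ≠ 1) = S := hf
  have houter : (univ.filter fun i : Fin n => ¬f i ≠ 1).card = n - S.card := by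
    have := Finset.card_filter_add_card_filter_not
      (s := (univ : Finset (Fin n))) (p := fun i => f i ≠ 1)
    rw [hS] at this
    simp only [Finset.card_univ, Fintype.card_fin] at this
    omega
  have h2 : (∏ i ∈ univ.filter fun i : Fin n => ¬f i ≠ 1,
      stepWeight (fun _ => u) l (fun _ => d) ((f i : ℤ) - 1)) = l ^ (n - S.card) := by
    rw [Finset.prod_congr rfl fun i hi => ?_, Finset.prod_const, houter]
    rw [Finset.mem_filter] at hi
    have : f i = 1 := by
      have := hi.2
      simp only [not_not] at this
      exact this
    rw [this]
    show stepWeight (fun _ => u) l (fun _ => d) (((1 : Fin 3) : ℤ) - 1) = l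
    norm_num [stepWeight]
  rw [h2, hS]
  congr 1
  rw [← Finset.prod_coe_sort S (fun i => stepWeight (fun _ => u) l (fun _ => d) ((f i : ℤ) - 1)),
    ← Equiv.prod_comp (S.orderIsoOfFin rfl).toEquiv
      (fun x : ↥S => stepWeight (fun _ => u) l (fun _ => d) ((f (x : Fin n) : ℤ) - 1))]
  have hstep : ∀ j : Fin S.card,
      stepWeight (fun _ => u) l (fun _ => d)
          ((f ((S.orderIsoOfFin rfl j : ↥S) : Fin n) : ℤ) - 1) =
        if ΦS S f j = true then u else d := by
    intro j
    have hmem : ((S.orderIsoOfFin rfl j : ↥S) : Fin n) ∈ S := (S.orderIsoOfFin rfl j).2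
    have hne : f ((S.orderIsoOfFin rfl j : ↥S) : Fin n) ≠ 1 := by
      have h' : ((S.orderIsoOfFin rfl j : ↥S) : Fin n) ∈ supp f := hf ▸ hmem
      simpa [supp] using h'
    rcases fin3_cases _ hne with h0 | h2'
    · have hb : ΦS S f j = false := by unfold ΦS; rw [h0]; decide
      rw [h0, hb]
      norm_num [stepWeight]
    · have hb : ΦS S f j = true := by unfold ΦS; rw [h2']; decide
      rw [h2', hb]
      norm_num [stepWeight]
  simp only [RelIso.coe_fn_toEquiv]
  rw [Finset.prod_congr rfl fun j _ => hstep j, Finset.prod_ite, Finset.prod_const,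
    Finset.prod_const]
  have hfc : (univ.filter fun x : Fin S.card => ¬ΦS S f x = true) =
      (univ.filter fun j => ΦS S f j = false) := by
    apply Finset.filter_congr
    intro j _
    simp
  rw [hfc]

/-- reconstruct a Motzkin path from a support set and a ± sequence. -/
def ΨS {n : ℕ} (S : Finset (Fin n)) (g : Fin S.card → Bool) : Fin n → Fin 3 :=
  fun i => if h : i ∈ S then (bif g ((S.orderIsoOfFin rfl).symm ⟨i, h⟩) then 2 else 0) else 1

lemma supp_ΨS {n : ℕ} (S : Finset (Fin n)) (g : Fin S.card → Bool) : supp (ΨS S g) = S := by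
  ext i
  simp only [supp, Finset.mem_filter, Finset.mem_univ, true_and]
  by_cases h : i ∈ S
  · simp only [ΨS, dif_pos h]
    cases g ((S.orderIsoOfFin rfl).symm ⟨i, h⟩) <;> simp [h]
  · simp [ΨS, dif_neg h, h]

lemma motzkin_inner_sum {n : ℕ} (u l d : ℕ) (S : Finset (Fin n)) :
    (∑ f ∈ univ.filter (fun f : Fin n → Fin 3 => supp f = S),
        if MValid f then ∏ i : Fin n, stepWeight (fun _ => u) l (fun _ => d) ((f i : ℤ) - 1)
        else 0) =
      (if 2 ∣ S.card then catalan (S.card / 2) else 0) *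
        u ^ (S.card / 2) * d ^ (S.card / 2) * l ^ (n - S.card) := by
  have hstep1 :
      (∑ f ∈ univ.filter (fun f : Fin n → Fin 3 => supp f = S),
        if MValid f then ∏ i : Fin n, stepWeight (fun _ => u) l (fun _ => d) ((f i : ℤ) - 1)
        else 0) =
      ∑ g : Fin S.card → Bool,
        if BValid g then
          u ^ (univ.filter fun j => g j = true).card *
            d ^ (univ.filter fun j => g j = false).card * l ^ (n - S.card)
        else 0 := by
    refine Finset.sum_bij' (fun f _ => ΦS S f) (fun g _ => ΨS S g) (fun f _ => Finset.mem_univ _)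
      (fun g _ => by rw [Finset.mem_filter]; exact ⟨Finset.mem_univ _, supp_ΨS S g⟩)
      ?_ ?_ ?_
    · -- left_inv : ΨS S (ΦS S f) = f
      intro f hf
      rw [Finset.mem_filter] at hf
      show ΨS S (ΦS S f) = f
      funext i
      by_cases h : i ∈ S
      · unfold ΨS
        rw [dif_pos h]
        have hidx : ΦS S f ((S.orderIsoOfFin rfl).symm ⟨i, h⟩) = decide (f i = 2) := by
          unfold ΦS
          congr 2
          rw [OrderIso.apply_symm_apply]
        rw [hidx]
        have hne : f i ≠ 1 := by
          have h' : i ∈ supp f := hf.2 ▸ h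
          simpa [supp] using h'
        rcases fin3_cases _ hne with h0 | h2
        · rw [h0, decide_eq_false (by decide)]
          rfl
        · rw [h2, decide_eq_true (by rfl)]
          rfl
      · unfold ΨS
        rw [dif_neg h]
        have h' : i ∉ supp f := hf.2 ▸ h
        have : ¬f i ≠ 1 := by simpa [supp] using h'
        simp only [not_not] at this
        rw [this]
    · -- right_inv : ΦS S (ΨS S g) = g
      intro g hg
      show ΦS S (ΨS S g) = g
      funext j
      have hmem : ((S.orderIsoOfFin rfl j : ↥S) : Fin n) ∈ S := (S.orderIsoOfFin rfl j).2
      unfold ΦS ΨS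
      rw [dif_pos hmem]
      have hidx : (S.orderIsoOfFin rfl).symm ⟨((S.orderIsoOfFin rfl j : ↥S) : Fin n), hmem⟩ = j := by
        rw [show (⟨((S.orderIsoOfFin rfl j : ↥S) : Fin n), hmem⟩ : ↥S) = S.orderIsoOfFin rfl j
          from Subtype.ext rfl]
        exact OrderIso.symm_apply_apply _ _
      rw [hidx]
      cases g j <;> decide
    · -- terms
      intro f hf
      rw [Finset.mem_filter] at hf
      exact if_congr (mvalid_iff S f hf.2) (weight_eq u l d S f hf.2) rfl
  rw [hstep1, ← Finset.sum_filter]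
  have hconst : ∀ g ∈ univ.filter (fun g : Fin S.card → Bool => BValid g),
      u ^ (univ.filter fun j => g j = true).card *
          d ^ (univ.filter fun j => g j = false).card * l ^ (n - S.card) =
        u ^ (S.card / 2) * d ^ (S.card / 2) * l ^ (n - S.card) := by
    intro g hg
    rw [Finset.mem_filter] at hg
    obtain ⟨ht, hfa⟩ := bvalid_counts g hg.2
    rw [ht, hfa]
  rw [Finset.sum_congr rfl hconst, Finset.sum_const, card_bvalid, smul_eq_mul]
  ring

lemma motzkin_nat (u l d n : ℕ) :
    motzkinCount 1 (fun _ => u) l (fun _ => d) 0 0 n =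
      ∑ m ∈ Finset.range (n + 1), n.choose m *
        ((if 2 ∣ m then catalan (m / 2) else 0) * u ^ (m / 2) * d ^ (m / 2) * l ^ (n - m)) := by
  have hmsum : ∀ f : Fin n → Fin 3, msum f n = ∑ i : Fin n, ((f i : ℤ) - 1) :=
    fun f => Finset.sum_congr rfl fun i _ => if_pos i.isLt
  have step1 : motzkinCount 1 (fun _ => u) l (fun _ => d) 0 0 n =
      ∑ f : Fin n → Fin 3,
        if MValid f then ∏ i : Fin n, stepWeight (fun _ => u) l (fun _ => d) ((f i : ℤ) - 1)
        else 0 := by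
    rw [motzkinCount]
    refine Finset.sum_congr rfl fun f _ => if_congr ?_ rfl rfl
    unfold MValid
    rw [hmsum f]
    constructor
    · rintro ⟨a, b⟩
      exact ⟨fun k => by simpa [msum] using a k, by simpa using b⟩
    · rintro ⟨a, b⟩
      exact ⟨fun k => by simpa [msum] using a k, by simpa using b⟩
  rw [step1,
    ← Finset.sum_fiberwise_of_maps_to (g := supp)
      (t := (univ : Finset (Finset (Fin n)))) (fun _ _ => Finset.mem_univ _) _]
  rw [Finset.sum_congr rfl fun S _ => motzkin_inner_sum u l d S]
  rw [← Finset.sum_fiberwise_of_maps_to (g := Finset.card)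
      (t := Finset.range (n + 1))
      (fun S _ => Finset.mem_range.mpr (Nat.lt_succ_of_le
        (le_trans (Finset.card_le_univ S) (by simp)))) _]
  refine Finset.sum_congr rfl fun m hm => ?_
  have hin : ∀ S ∈ univ.filter (fun S : Finset (Fin n) => S.card = m),
      (if 2 ∣ S.card then catalan (S.card / 2) else 0) * u ^ (S.card / 2) * d ^ (S.card / 2) *
          l ^ (n - S.card) =
        (if 2 ∣ m then catalan (m / 2) else 0) * u ^ (m / 2) * d ^ (m / 2) * l ^ (n - m) := by
    intro S hS
    rw [Finset.mem_filter] at hS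
    rw [hS.2]
  rw [Finset.sum_congr rfl hin, Finset.sum_const, smul_eq_mul]
  congr 1
  rw [show univ.filter (fun S : Finset (Fin n) => S.card = m) = Finset.powersetCard m univ by
    rw [Finset.powersetCard_eq_filter, Finset.powerset_univ]]
  rw [Finset.card_powersetCard]
  simp

theorem motzkin_explicit' (u l d : ℕ) (n : ℕ) :
    (motzkinCount 1 (fun _ => u) l (fun _ => d) 0 0 n : ℚ) =
      ∑ j ∈ Finset.range (n / 2 + 1),
        (1 / ((j : ℚ) + 1)) * (Nat.choose (2 * j) j : ℚ) * (Nat.choose n (2 * j) : ℚ) *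
          (u : ℚ) ^ j * (d : ℚ) ^ j * (l : ℚ) ^ (n - 2 * j) := by
  have hcat : ∀ j : ℕ, (catalan j : ℚ) = 1 / ((j : ℚ) + 1) * ((2 * j).choose j : ℚ) := by
    intro j
    have h := succ_mul_catalan_eq_centralBinom j
    unfold Nat.centralBinom at h
    have h' : ((j : ℚ) + 1) * (catalan j : ℚ) = ((2 * j).choose j : ℚ) := by
      exact_mod_cast h
    have hj : ((j : ℚ) + 1) ≠ 0 := by positivity
    field_simp
    linarith [h']
  rw [motzkin_nat]
  have step2 : ((∑ m ∈ Finset.range (n + 1), n.choose m *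
        ((if 2 ∣ m then catalan (m / 2) else 0) * u ^ (m / 2) * d ^ (m / 2) * l ^ (n - m)) : ℕ) : ℚ)
      = ∑ m ∈ Finset.range (n + 1),
          (if 2 ∣ m then ((n.choose m : ℚ) * (catalan (m / 2) : ℚ) * (u : ℚ) ^ (m / 2) *
            (d : ℚ) ^ (m / 2) * (l : ℚ) ^ (n - m)) else 0) := by
    rw [Nat.cast_sum]
    refine Finset.sum_congr rfl fun m _ => ?_
    split_ifs with h <;> push_cast <;> ring
  rw [step2, ← Finset.sum_filter]
  refine Finset.sum_bij' (fun m _ => m / 2) (fun j _ => 2 * j) ?_ ?_ ?_ ?_ ?_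
  · intro m hm
    simp only [Finset.mem_filter, Finset.mem_range] at hm
    simp only [Finset.mem_range]
    omega
  · intro j hj
    simp only [Finset.mem_range] at hj
    simp only [Finset.mem_filter, Finset.mem_range]
    omega
  · intro m hm
    simp only [Finset.mem_filter, Finset.mem_range] at hm
    show 2 * (m / 2) = m
    omega
  · intro j hj
    show 2 * j / 2 = j
    omega
  · intro m hm
    simp only [Finset.mem_filter, Finset.mem_range] at hm
    obtain ⟨hmn, hdvd⟩ := hm
    beta_reduce
    have h2 : 2 * (m / 2) = m := by omega
    rw [hcat (m / 2), h2]
    ring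

/-- `m_n^{(u,l,d)} = Σ_{j=0}^{⌊n/2⌋} (1/(j+1))·C(2j,j)·C(n,2j)·uʲdʲl^{n−2j}`. -/
theorem motzkin_explicit (u l d : ℕ) (n : ℕ) :
    (motzkinCount 1 (fun _ => u) l (fun _ => d) 0 0 n : ℚ) =
      ∑ j ∈ Finset.range (n / 2 + 1),
        (1 / ((j : ℚ) + 1)) * (Nat.choose (2 * j) j : ℚ) * (Nat.choose n (2 * j) : ℚ) *
          (u : ℚ) ^ j * (d : ℚ) ^ j * (l : ℚ) ^ (n - 2 * j) :=
  motzkin_explicit' u l d n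
end

section
/- For all natural numbers u, l, d, the generating function M(x) = Σ_{n≥0} m_n^{(u,l,d)} x^n ∈ ℚ⟦x⟧ satisfies M(x) = Σ_{j≥0} (1/(j+1)) · C(2j, j) · u^j d^j x^{2j} / (1−lx)^{2j+1}, i.e., M(x) equals the composition (1/(1−lx)) · C(udx²/(1−lx)²), where C(y) = Σ_{n≥0} (1/(n+1)) C(2n,n) y^n is the generating function of the Catalan numbers and the substituted series udx²/(1−lx)² has zero constant term. -/
open PowerSeries Finset

noncomputable section

def W (l : ℕ) : PowerSeries ℚ := (1 - C (l:ℚ) * X)⁻¹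

lemma W_cancel (l : ℕ) : (1 - C (l:ℚ) * X) * W l = 1 := by
  apply PowerSeries.mul_inv_cancel
  simp

def Yp (u l d : ℕ) : PowerSeries ℚ := C ((u:ℚ)*(d:ℚ)) * X^2 * (W l)^2

lemma Yp_pow (u l d j : ℕ) :
    Yp u l d ^ j = X^(2*j) * (C ((u:ℚ)*(d:ℚ))^j * (W l)^(2*j)) := by
  rw [Yp]; ring

lemma coeff_Yp_pow_zero (u l d : ℕ) {j m : ℕ} (h : m < 2*j) :
    coeff m (Yp u l d ^ j) = 0 := by
  rw [Yp_pow, coeff_X_pow_mul', if_neg (by omega)]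

def Kp (u l d : ℕ) : PowerSeries ℚ :=
  mk fun m => ∑ j ∈ range (m/2+1), (catalan j : ℚ) * coeff m (Yp u l d ^ j)

lemma coeff_Kp (u l d : ℕ) {m N : ℕ} (h : m/2 < N) :
    coeff m (Kp u l d) = ∑ j ∈ range N, (catalan j : ℚ) * coeff m (Yp u l d ^ j) := by
  rw [Kp, coeff_mk]
  apply Finset.sum_subset
  · intro j hj; simp only [mem_range] at *; omega
  · intro j _ hj
    simp only [mem_range, not_lt] at hj
    rw [coeff_Yp_pow_zero u l d (by omega), mul_zero]

lemma sums_conv (n : ℕ) (φ : ℕ → ℚ) (hφ : ∀ m, n < 2*m → φ m = 0) :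
    ∑ j ∈ range (n+1), ∑ k ∈ range (n+1), (catalan j : ℚ) * (catalan k : ℚ) * φ (j+k+1)
      = ∑ m ∈ range n, ∑ j ∈ range (m+1), (catalan j : ℚ) * (catalan (m-j) : ℚ) * φ (m+1) := by
  rw [← Finset.sum_product']
  rw [← Finset.sum_filter_add_sum_filter_not ((range (n+1)) ×ˢ (range (n+1)))
    (fun p => p.1 + p.2 < n)]
  have h2 : ∑ p ∈ ((range (n+1)) ×ˢ (range (n+1))).filter (fun p => ¬ p.1 + p.2 < n),
      (catalan p.1 : ℚ) * (catalan p.2 : ℚ) * φ (p.1+p.2+1) = 0 := by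
    apply Finset.sum_eq_zero
    intro p hp
    simp only [mem_filter, mem_product, mem_range, not_lt] at hp
    rw [hφ _ (by omega), mul_zero]
  rw [h2, add_zero, Finset.sum_sigma']
  apply Finset.sum_nbij' (i := fun p => ⟨p.1 + p.2, p.1⟩)
    (j := fun x => (x.2, x.1 - x.2))
  · intro p hp
    simp only [mem_filter, mem_product, mem_range, Finset.mem_sigma] at *
    omega
  · intro x hx
    simp only [mem_filter, mem_product, mem_range, Finset.mem_sigma] at *
    omega
  · intro p hp
    ext
    · rfl
    · simp
  · intro x hx
    simp only [Finset.mem_sigma, mem_range] at hx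
    ext
    · simp; omega
    · rfl
  · intro p hp
    simp only [mem_filter, mem_product, mem_range] at hp
    have : p.1 + p.2 - p.1 = p.2 := by omega
    simp [this]

lemma Kp_eq (u l d : ℕ) : Kp u l d = 1 + Yp u l d * (Kp u l d)^2 := by
  ext n
  set φ : ℕ → ℚ := fun m => coeff n (Yp u l d ^ m) with hφdef
  have hφ : ∀ m, n < 2*m → φ m = 0 := fun m hm => coeff_Yp_pow_zero u l d hm
  set F : PowerSeries ℚ := ∑ j ∈ range (n+1), C (catalan j : ℚ) * Yp u l d ^ j with hF
  have hcoe : ∀ m, m ≤ n → coeff m (Kp u l d) = coeff m F := by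
    intro m hm
    rw [coeff_Kp u l d (show m/2 < n+1 by omega), hF, map_sum]
    apply Finset.sum_congr rfl
    intro j _
    rw [coeff_C_mul]
  have hdvd : (X : PowerSeries ℚ)^(n+1) ∣ (Kp u l d - F) := by
    rw [PowerSeries.X_pow_dvd_iff]
    intro m hm
    rw [map_sub, hcoe m (by omega), sub_self]
  obtain ⟨R, hR⟩ := hdvd
  have hKF : Kp u l d = F + X^(n+1) * R := by linear_combination hR
  have key : coeff n (Yp u l d * (Kp u l d)^2) = coeff n (Yp u l d * F^2) := by
    have : Yp u l d * (Kp u l d)^2 =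
        Yp u l d * F^2 + X^(n+1) * (Yp u l d * (2*F*R + X^(n+1)*R^2)) := by
      rw [hKF]; ring
    rw [this, map_add, coeff_X_pow_mul', if_neg (by omega), add_zero]
  rw [map_add, key]
  have hYF : Yp u l d * F^2 =
      ∑ j ∈ range (n+1), ∑ k ∈ range (n+1),
        C ((catalan j : ℚ) * (catalan k : ℚ)) * Yp u l d ^ (j+k+1) := by
    rw [hF, sq, Finset.sum_mul_sum, Finset.mul_sum]
    apply Finset.sum_congr rfl; intro j _
    rw [Finset.mul_sum]
    apply Finset.sum_congr rfl; intro k _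
    rw [map_mul]; ring
  have hc2 : coeff n (Yp u l d * F^2)
      = ∑ j ∈ range (n+1), ∑ k ∈ range (n+1), (catalan j : ℚ) * (catalan k : ℚ) * φ (j+k+1) := by
    rw [hYF, map_sum]
    apply Finset.sum_congr rfl; intro j _
    rw [map_sum]
    apply Finset.sum_congr rfl; intro k _
    rw [coeff_C_mul]
  rw [hc2, sums_conv n φ hφ]
  have hKn : coeff n (Kp u l d) = ∑ m ∈ range (n+1), (catalan m : ℚ) * φ m :=
    coeff_Kp u l d (by omega)
  rw [hKn, Finset.sum_range_succ']
  have h0 : (catalan 0 : ℚ) * φ 0 = coeff n 1 := by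
    simp [hφdef, catalan_zero]
  rw [h0, add_comm]
  congr 1
  apply Finset.sum_congr rfl
  intro m _
  rw [catalan_succ' m, Nat.sum_antidiagonal_eq_sum_range_succ_mk, Nat.cast_sum, Finset.sum_mul]
  apply Finset.sum_congr rfl
  intro j _
  push_cast
  ring

def Sp (u l d : ℕ) : PowerSeries ℚ := W l * Kp u l d

lemma Sp_eq (u l d : ℕ) :
    Sp u l d = 1 + C (l:ℚ) * X * Sp u l d + C ((u:ℚ)*(d:ℚ)) * X^2 * (Sp u l d)^2 := by
  have h2 : Sp u l d - C (l:ℚ) * X * Sp u l d = Kp u l d := by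
    have h1 := W_cancel l
    rw [Sp]
    linear_combination Kp u l d * h1
  have h3 : Yp u l d * (Kp u l d)^2 = C ((u:ℚ)*(d:ℚ)) * X^2 * (Sp u l d)^2 := by
    rw [Sp, Yp]; ring
  have h4 := Kp_eq u l d
  linear_combination h2 + h4 + h3

lemma catalan_cast (j : ℕ) :
    (catalan j : ℚ) = (1 / ((j:ℚ)+1)) * (Nat.choose (2*j) j : ℚ) := by
  rw [catalan_eq_centralBinom_div,
    Nat.cast_div (Nat.succ_dvd_centralBinom j) (by push_cast; positivity)]
  rw [Nat.centralBinom]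
  push_cast
  ring

lemma coeff_Sp (u l d n : ℕ) :
    coeff n (Sp u l d)
      = ∑ j ∈ range (n/2+1), (catalan j : ℚ) * coeff n (W l * Yp u l d ^ j) := by
  rw [Sp, coeff_mul]
  have h : ∀ p ∈ antidiagonal n, coeff p.1 (W l) * coeff p.2 (Kp u l d)
      = ∑ j ∈ range (n/2+1),
          (catalan j:ℚ) * (coeff p.1 (W l) * coeff p.2 (Yp u l d ^ j)) := by
    intro p hp
    rw [HasAntidiagonal.mem_antidiagonal] at hp
    rw [coeff_Kp u l d (show p.2/2 < n/2+1 by omega), Finset.mul_sum]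
    apply Finset.sum_congr rfl; intro j _; ring
  rw [Finset.sum_congr rfl h, Finset.sum_comm]
  apply Finset.sum_congr rfl; intro j _
  rw [coeff_mul, Finset.mul_sum]

lemma coeff_Sp_final (u l d n : ℕ) :
    coeff n (Sp u l d) = ∑ j ∈ range (n/2+1), coeff n
      (C ((1 / ((j : ℚ) + 1)) * (Nat.choose (2 * j) j : ℚ) * (u : ℚ) ^ j * (d : ℚ) ^ j) *
        X ^ (2 * j) * ((1 - C (l:ℚ) * X)⁻¹) ^ (2 * j + 1)) := by
  rw [coeff_Sp]
  apply Finset.sum_congr rfl; intro j _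
  have harg : (1 / ((j : ℚ) + 1)) * (Nat.choose (2 * j) j : ℚ) * (u : ℚ) ^ j * (d : ℚ) ^ j
      = (catalan j : ℚ) * ((u:ℚ)*(d:ℚ))^j := by
    rw [catalan_cast]; ring
  have hterm : (C ((1 / ((j : ℚ) + 1)) * (Nat.choose (2 * j) j : ℚ) * (u : ℚ) ^ j * (d : ℚ) ^ j) *
        X ^ (2 * j) * ((1 - C (l:ℚ) * X)⁻¹) ^ (2 * j + 1))
      = C (catalan j : ℚ) * (W l * Yp u l d ^ j) := by
    rw [harg, Yp_pow, map_mul, map_pow, W]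
    ring
  rw [hterm, coeff_C_mul]
def mcN (u l d : ℕ) (s : ℤ) (t n : ℕ) : ℕ :=
  ∑ g : Fin n → Fin 3,
    if ((∀ k : Fin (n + 1),
          0 ≤ s + ∑ i : Fin n, if (i : ℕ) < (k : ℕ) then ((g i : ℤ) - 1) else 0) ∧
        s + (∑ i : Fin n, ((g i : ℤ) - 1)) = (t : ℤ))
    then ∏ i : Fin n, stepWeight (fun _ => u) l (fun _ => d) ((g i : ℤ) - 1)
    else 0

lemma mcN_eq (u l d s t n : ℕ) :
    motzkinCount 1 (fun _ => u) l (fun _ => d) s t n = mcN u l d (s : ℤ) t n := rfl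

lemma mcN_neg (u l d : ℕ) {s : ℤ} (hs : s < 0) (t n : ℕ) : mcN u l d s t n = 0 := by
  rw [mcN]
  apply Finset.sum_eq_zero
  intro g _
  rw [if_neg]
  rintro ⟨h1, -⟩
  have := h1 0
  simp only [Fin.val_zero, Nat.not_lt_zero, if_false, Finset.sum_const_zero, add_zero] at this
  omega

lemma mcN_zero (u l d : ℕ) (s : ℤ) (t : ℕ) :
    mcN u l d s t 0 = if s = (t : ℤ) then 1 else 0 := by
  rw [mcN]
  rw [Finset.sum_eq_single_of_mem (fun i : Fin 0 => (0 : Fin 3)) (Finset.mem_univ _)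
    (by intro g _ hg; exact absurd (funext fun i => i.elim0) hg)]
  simp only [Finset.univ_eq_empty, Finset.sum_empty, Finset.prod_empty, add_zero]
  by_cases h : s = (t : ℤ)
  · rw [if_pos h, if_pos ⟨fun k => by omega, h⟩]
  · rw [if_neg h, if_neg (by rintro ⟨-, h2⟩; exact h h2)]

lemma mcN_succ (u l d t n : ℕ) (s : ℤ) (hs : 0 ≤ s) :
    mcN u l d s t (n+1) =
      d * mcN u l d (s-1) t n + l * mcN u l d s t n + u * mcN u l d (s+1) t n := by
  have step : mcN u l d s t (n+1) =
      ∑ c : Fin 3, stepWeight (fun _ => u) l (fun _ => d) ((c:ℤ)-1) *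
        mcN u l d (s + ((c:ℤ)-1)) t n := by
    simp only [mcN]
    rw [← Equiv.sum_comp (Fin.consEquiv (fun _ : Fin (n+1) => Fin 3))]
    rw [Fintype.sum_prod_type]
    apply Finset.sum_congr rfl
    intro c _
    rw [Finset.mul_sum]
    apply Finset.sum_congr rfl
    intro g _
    have hcons : ⇑(Fin.consEquiv (fun _ : Fin (n+1) => Fin 3)) (c, g) = Fin.cons (α := fun _ => Fin 3) c g := rfl
    rw [hcons]
    have hpre : ∀ k : Fin (n+1),
        (∑ i : Fin (n+1),
            if (i:ℕ) < ((k.succ : Fin (n+2)):ℕ) then (((Fin.cons (α := fun _ => Fin 3) c g i) : ℤ) - 1) else 0)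
          = ((c:ℤ)-1) + ∑ i : Fin n, (if (i:ℕ) < (k:ℕ) then ((g i:ℤ)-1) else 0) := by
      intro k
      rw [Fin.sum_univ_succ]
      simp only [Fin.cons_zero, Fin.cons_succ, Fin.val_succ, Fin.val_zero]
      rw [if_pos (Nat.succ_pos _)]
      congr 1
      apply Finset.sum_congr rfl
      intro i _
      simp only [Nat.add_lt_add_iff_right]
    have htot : (∑ i : Fin (n+1), (((Fin.cons (α := fun _ => Fin 3) c g i) : ℤ) - 1))
        = ((c:ℤ)-1) + ∑ i : Fin n, ((g i:ℤ)-1) := by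
      rw [Fin.sum_univ_succ]
      simp only [Fin.cons_zero, Fin.cons_succ]
    have hiff : ((∀ k : Fin (n+2),
          0 ≤ s + ∑ i : Fin (n+1), if (i:ℕ) < (k:ℕ) then ((Fin.cons (α := fun _ => Fin 3) c g i:ℤ)-1) else 0) ∧
          s + ∑ i : Fin (n+1), ((Fin.cons (α := fun _ => Fin 3) c g i:ℤ)-1) = (t:ℤ))
        ↔ ((∀ k : Fin (n+1),
          0 ≤ (s + ((c:ℤ)-1)) + ∑ i : Fin n, if (i:ℕ)<(k:ℕ) then ((g i:ℤ)-1) else 0) ∧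
          (s + ((c:ℤ)-1)) + ∑ i : Fin n, ((g i:ℤ)-1) = (t:ℤ)) := by
      constructor
      · rintro ⟨h1, h2⟩
        constructor
        · intro k
          have := h1 k.succ
          rw [hpre k] at this
          linarith
        · rw [htot, ← add_assoc] at h2
          exact h2
      · rintro ⟨h1, h2⟩
        constructor
        · intro k
          refine Fin.cases ?_ (fun k' => ?_) k
          · simpa using hs
          · rw [hpre k']
            have := h1 k'
            linarith
        · rw [htot, ← add_assoc]
          exact h2
    have hprod : (∏ i : Fin (n+1), stepWeight (fun _ => u) l (fun _ => d) (((Fin.cons (α := fun _ => Fin 3) c g i) : ℤ) - 1))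
        = stepWeight (fun _ => u) l (fun _ => d) ((c:ℤ)-1) *
          ∏ i : Fin n, stepWeight (fun _ => u) l (fun _ => d) ((g i:ℤ)-1) := by
      rw [Fin.prod_univ_succ]
      simp only [Fin.cons_zero, Fin.cons_succ]
    rw [mul_ite, mul_zero]
    exact if_congr hiff hprod rfl
  rw [step, Fin.sum_univ_three]
  have e0 : ((0 : Fin 3) : ℤ) - 1 = -1 := rfl
  have e1 : ((1 : Fin 3) : ℤ) - 1 = 0 := rfl
  have e2 : ((2 : Fin 3) : ℤ) - 1 = 1 := rfl
  rw [e0, e1, e2]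
  have w0 : stepWeight (fun _ => u) l (fun _ => d) (-1) = d := rfl
  have w1 : stepWeight (fun _ => u) l (fun _ => d) 0 = l := rfl
  have w2 : stepWeight (fun _ => u) l (fun _ => d) 1 = u := rfl
  rw [w0, w1, w2, show s + -1 = s - 1 by ring, show s + 0 = s by ring]

lemma constCoeff_Kp (u l d : ℕ) : constantCoeff (Kp u l d) = 1 := by
  rw [← coeff_zero_eq_constantCoeff_apply, Kp, coeff_mk]
  simp

lemma constCoeff_Sp (u l d : ℕ) : constantCoeff (Sp u l d) = 1 := by
  have hW : constantCoeff (W l) = 1 := by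
    have h := congrArg (constantCoeff) (W_cancel l)
    simpa using h
  rw [Sp, map_mul, hW, constCoeff_Kp, mul_one]

noncomputable def cS (u l d : ℕ) (s n : ℕ) : ℚ :=
  coeff n ((C (d:ℚ) * X)^s * Sp u l d ^ (s+1))

lemma hC_split (u d : ℕ) : C ((u:ℚ)*(d:ℚ)) = C (u:ℚ) * C (d:ℚ) := map_mul _ _ _

lemma cS_zero (u l d s : ℕ) : cS u l d s 0 = if s = 0 then 1 else 0 := by
  rw [cS, coeff_zero_eq_constantCoeff_apply, map_mul, map_pow, map_pow, map_mul,
    constantCoeff_X, constantCoeff_C, mul_zero, constCoeff_Sp, one_pow, mul_one]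
  cases s with
  | zero => simp
  | succ s' => simp

lemma cS_succ0 (u l d n : ℕ) :
    cS u l d 0 (n+1) = l * cS u l d 0 n + u * cS u l d 1 n := by
  have H0 : Sp u l d = 1 + X * (C (l:ℚ) * Sp u l d
      + C (u:ℚ) * ((C (d:ℚ) * X) * (Sp u l d)^2)) := by
    linear_combination (Sp_eq u l d) + (Sp u l d)^2 * X^2 * (hC_split u d)
  rw [cS, cS, cS, pow_zero, one_mul, pow_one, pow_one]
  rw [show ((n:ℕ)+1) = n+1 from rfl]
  nth_rewrite 1 [H0]
  rw [map_add, coeff_one, if_neg (Nat.succ_ne_zero n), zero_add, coeff_succ_X_mul,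
    map_add, coeff_C_mul, coeff_C_mul]

lemma cS_succ (u l d s n : ℕ) :
    cS u l d (s+1) (n+1) = d * cS u l d s n + l * cS u l d (s+1) n + u * cS u l d (s+2) n := by
  have H1 : (C (d:ℚ) * X)^(s+1) * Sp u l d ^ (s+2)
      = X * (C (d:ℚ) * ((C (d:ℚ) * X)^s * Sp u l d ^(s+1))
        + C (l:ℚ) * ((C (d:ℚ) * X)^(s+1) * Sp u l d ^(s+2))
        + C (u:ℚ) * ((C (d:ℚ) * X)^(s+2) * Sp u l d ^(s+3))) := by
    linear_combination ((C (d:ℚ) * X)^(s+1) * Sp u l d ^(s+1)) * (Sp_eq u l d)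
      + ((C (d:ℚ) * X)^(s+1) * Sp u l d ^(s+3) * X^2) * (hC_split u d)
  have h2 := congrArg (coeff (n+1)) H1
  rw [coeff_succ_X_mul, map_add, map_add, coeff_C_mul, coeff_C_mul, coeff_C_mul] at h2
  rw [cS, cS, cS, cS, show s+1+1 = s+2 from rfl, show s+2+1 = s+3 from rfl]
  exact h2

lemma glue (u l d : ℕ) : ∀ (n : ℕ) (s : ℕ), ((mcN u l d (s:ℤ) 0 n : ℕ) : ℚ) = cS u l d s n := by
  intro n
  induction n with
  | zero =>
    intro s
    rw [mcN_zero, cS_zero, Nat.cast_zero]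
    by_cases hs : s = 0
    · subst hs; simp
    · rw [if_neg (by exact_mod_cast hs), if_neg hs, Nat.cast_zero]
  | succ n ih =>
    intro s
    rw [mcN_succ u l d 0 n (s:ℤ) (Int.natCast_nonneg s)]
    cases s with
    | zero =>
      rw [show ((0:ℕ):ℤ) - 1 = -1 by norm_num,
        mcN_neg u l d (show (-1:ℤ) < 0 by norm_num) 0 n,
        show ((0:ℕ):ℤ) + 1 = ((1:ℕ):ℤ) by norm_num]
      rw [cS_succ0 u l d n, ← ih 0, ← ih 1]
      push_cast
      ring
    | succ s' =>
      rw [show ((s'+1:ℕ):ℤ) - 1 = ((s':ℕ):ℤ) by push_cast; ring,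
        show ((s'+1:ℕ):ℤ) + 1 = ((s'+2:ℕ):ℤ) by push_cast; ring]
      rw [cS_succ u l d s' n, ← ih s', ← ih (s'+1), ← ih (s'+2)]
      push_cast
      ring


/-- `M(x) = Σ_{j≥0} (1/(j+1))·C(2j,j)·uʲdʲ x^{2j}/(1−lx)^{2j+1}` in `ℚ⟦x⟧`.
Since the `j`-th summand is divisible by `x^{2j}`, its `n`-th coefficient vanishes for
`2j > n`; hence the infinite sum is faithfully expressed coefficientwise by the finite sum
over `j ≤ ⌊n/2⌋`. Here `(1−lx)⁻¹` is the inverse of the unit `1−lx` of `ℚ⟦x⟧`. -/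
theorem motzkin_gf_catalan_expansion (u l d : ℕ) (n : ℕ) :
    coeff n (motzkinGF 1 (fun _ => u) l (fun _ => d) 0 0) =
      ∑ j ∈ Finset.range (n / 2 + 1),
        coeff n
          (C ((1 / ((j : ℚ) + 1)) * (Nat.choose (2 * j) j : ℚ) * (u : ℚ) ^ j * (d : ℚ) ^ j) *
            X ^ (2 * j) * ((1 - C (l : ℚ) * X)⁻¹) ^ (2 * j + 1)) := by
  rw [motzkinGF, coeff_mk, mcN_eq, glue u l d n 0]
  rw [show cS u l d 0 n = coeff n (Sp u l d) by rw [cS, pow_zero, one_mul, pow_one]]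
  exact coeff_Sp_final u l d n
end
end

section
/- Fix a rank r ≥ 1 and natural number weights u_1,…,u_r, l, d_1,…,d_r, and let A_{s,t}(x) = Σ_{n≥0} |𝒜_{s,t}(n)| x^n ∈ ℚ⟦x⟧. Then the generating function A_{0,0} for the (u,l,d)-Motzkin numbers of rank r satisfies A_{0,0} = 1 + l·x·A_{0,0} + x²·A_{0,0} · Σ_{p=1}^{r} Σ_{q=1}^{r} u_p d_q A_{p−1,q−1}. -/
open PowerSeries Finset

def pcount (r : ℕ) (u : ℕ → ℕ) (l : ℕ) (d : ℕ → ℕ) (s t : ℤ) : ℕ → ℕ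
  | 0 => if 0 ≤ s ∧ s = t then 1 else 0
  | n + 1 =>
      if 0 ≤ s then
        ∑ j : Fin (2 * r + 1), stepWeight u l d ((j : ℤ) - r) *
          pcount r u l d (s + ((j : ℤ) - r)) t n
      else 0

variable (r : ℕ) (u : ℕ → ℕ) (l : ℕ) (d : ℕ → ℕ)

lemma pcount_neg {s : ℤ} (hs : s < 0) (t : ℤ) (n : ℕ) : pcount r u l d s t n = 0 := by
  cases n <;> simp [pcount, hs, not_le.2 hs]

lemma sum_fin_shift {M : Type*} [AddCommMonoid M] (g : ℤ → M) :
    ∑ j : Fin (2 * r + 1), g ((j : ℤ) - r) = ∑ z ∈ Finset.Icc (-(r : ℤ)) r, g z := by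
  refine Finset.sum_bij' (fun (j : Fin (2*r+1)) _ => (j : ℤ) - r)
    (fun z hz => ⟨(z + r).toNat, by simp only [Finset.mem_Icc] at hz; omega⟩)
    ?_ ?_ ?_ ?_ ?_
  · intro j _; have := j.isLt; simp only [Finset.mem_Icc]; omega
  · intro z hz; exact Finset.mem_univ _
  · intro j _; have := j.isLt; apply Fin.ext; simp
  · intro z hz; simp only [Finset.mem_Icc] at hz; simp; omega
  · intro j _; rfl

lemma pcount_succ (s t : ℤ) (hs : 0 ≤ s) (n : ℕ) :
    pcount r u l d s t (n + 1) =
      ∑ z ∈ Finset.Icc (-(r : ℤ)) r, stepWeight u l d z * pcount r u l d (s + z) t n := by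
  rw [pcount, if_pos hs]
  exact sum_fin_shift r (fun z => stepWeight u l d z * pcount r u l d (s + z) t n)

lemma sum_Icc_int_nat {M : Type*} [AddCommMonoid M] (b : ℕ) (g : ℤ → M) :
    ∑ z ∈ Finset.Icc (1 : ℤ) (b : ℤ), g z = ∑ m ∈ Finset.Icc 1 b, g m := by
  refine Finset.sum_bij' (fun z (hz : z ∈ Finset.Icc (1:ℤ) (b:ℤ)) => z.toNat)
    (fun m (hm : m ∈ Finset.Icc 1 b) => (m : ℤ)) ?_ ?_ ?_ ?_ ?_ <;>
    intro x hx <;> beta_reduce <;> simp only [Finset.mem_Icc] at hx ⊢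
  · omega
  · omega
  · omega
  · omega
  · congr 1; omega

lemma pcount_zero_succ (n : ℕ) :
    pcount r u l d 0 0 (n + 1) =
      l * pcount r u l d 0 0 n +
        ∑ p ∈ Finset.Icc 1 r, u p * pcount r u l d (p : ℤ) 0 n := by
  rw [pcount_succ r u l d 0 0 le_rfl n]
  have hsub : Finset.Icc (0 : ℤ) (r : ℤ) ⊆ Finset.Icc (-(r : ℤ)) r := by
    apply Finset.Icc_subset_Icc _ le_rfl; omega
  rw [← Finset.sum_subset hsub (by
    intro z hz hz'
    simp only [Finset.mem_Icc] at hz hz'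
    have : z < 0 := by omega
    rw [pcount_neg r u l d (by omega) 0 n, mul_zero])]
  have h0 : Finset.Icc (0 : ℤ) (r : ℤ) = insert (0:ℤ) (Finset.Icc (1:ℤ) (r:ℤ)) := by
    ext z; simp only [Finset.mem_Icc, Finset.mem_insert]; omega
  rw [h0, Finset.sum_insert (by simp), sum_Icc_int_nat]
  have : stepWeight u l d 0 = l := by simp [stepWeight]
  rw [this, zero_add]
  congr 1
  apply Finset.sum_congr rfl
  intro m hm
  simp only [Finset.mem_Icc] at hm
  have hz : (0:ℤ) < (m:ℤ) := by exact_mod_cast Nat.lt_of_lt_of_le Nat.zero_lt_one hm.1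
  simp [stepWeight, hz, zero_add, show m ≠ 0 by omega]

lemma pcount_zero (s t : ℤ) :
    pcount r u l d s t 0 = if 0 ≤ s ∧ s = t then 1 else 0 := rfl

lemma firstPassage (n : ℕ) : ∀ p : ℕ, 1 ≤ p →
    pcount r u l d (p : ℤ) 0 n =
      ∑ q ∈ Finset.Icc 1 r, d q *
        ∑ a ∈ Finset.range n,
          pcount r u l d ((p : ℤ) - 1) ((q : ℤ) - 1) a * pcount r u l d 0 0 (n - 1 - a) := by
  induction n with
  | zero =>
    intro p hp
    rw [pcount_zero, if_neg (by intro h; omega)]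
    simp
  | succ n ih =>
    intro p hp
    rw [pcount_succ r u l d _ 0 (by positivity) n]
    have key : ∀ q : ℕ,
        (∑ a ∈ Finset.range (n + 1),
          pcount r u l d ((p : ℤ) - 1) ((q : ℤ) - 1) a * pcount r u l d 0 0 (n + 1 - 1 - a))
        = (∑ a ∈ Finset.range n, (∑ z ∈ Finset.Icc (-(r : ℤ)) r,
              stepWeight u l d z * pcount r u l d ((p : ℤ) + z - 1) ((q : ℤ) - 1) a)
            * pcount r u l d 0 0 (n - 1 - a))
          + (if p = q then pcount r u l d 0 0 n else 0) := by
      intro q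
      rw [Finset.sum_range_succ']
      congr 1
      · apply Finset.sum_congr rfl
        intro a _
        rw [pcount_succ r u l d _ _ (by omega) a]
        have h1 : n + 1 - 1 - (a + 1) = n - 1 - a := by omega
        rw [h1]
        congr 1
        apply Finset.sum_congr rfl
        intro z _
        have h2 : (p : ℤ) - 1 + z = (p : ℤ) + z - 1 := by ring
        rw [h2]
      · by_cases hpq : p = q
        · subst hpq
          rw [pcount_zero, if_pos ⟨by omega, rfl⟩, if_pos rfl, one_mul]
          norm_num
        · rw [pcount_zero, if_neg (by intro h; exact hpq (by omega)), if_neg hpq, zero_mul]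
    have step1 : ∑ q ∈ Finset.Icc 1 r, d q *
          ∑ a ∈ Finset.range (n + 1),
            pcount r u l d ((p : ℤ) - 1) ((q : ℤ) - 1) a * pcount r u l d 0 0 (n + 1 - 1 - a)
        = (∑ q ∈ Finset.Icc 1 r, d q *
            ∑ a ∈ Finset.range n, (∑ z ∈ Finset.Icc (-(r : ℤ)) r,
              stepWeight u l d z * pcount r u l d ((p : ℤ) + z - 1) ((q : ℤ) - 1) a)
            * pcount r u l d 0 0 (n - 1 - a))
          + ∑ q ∈ Finset.Icc 1 r, d q * (if p = q then pcount r u l d 0 0 n else 0) := by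
      rw [← Finset.sum_add_distrib]
      exact Finset.sum_congr rfl (fun q _ => by rw [key q, mul_add])
    rw [step1]
    have main : ∀ z ∈ Finset.Icc (-(r : ℤ)) r,
        stepWeight u l d z * pcount r u l d ((p : ℤ) + z) 0 n =
          stepWeight u l d z * (∑ q ∈ Finset.Icc 1 r, d q *
            ∑ a ∈ Finset.range n,
              pcount r u l d ((p : ℤ) + z - 1) ((q : ℤ) - 1) a * pcount r u l d 0 0 (n - 1 - a))
          + (if z = -(p : ℤ) then stepWeight u l d z * pcount r u l d 0 0 n else 0) := by
      intro z hz
      simp only [Finset.mem_Icc] at hz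
      rcases lt_trichotomy ((p : ℤ) + z) 0 with hlt | heq | hgt
      · rw [if_neg (by omega), pcount_neg r u l d hlt]
        have hz0 : ∀ q a, pcount r u l d ((p : ℤ) + z - 1) ((q : ℤ) - 1) a = 0 :=
          fun q a => pcount_neg r u l d (by omega) _ a
        simp [hz0]
      · rw [if_pos (by omega), show (p : ℤ) + z = 0 from heq]
        have hz0 : ∀ (t : ℤ) (a : ℕ), pcount r u l d (-1) t a = 0 :=
          fun t a => pcount_neg r u l d (by omega) t a
        simp [hz0]
      · rw [if_neg (by omega), add_zero]
        have h1 : (0 : ℤ) < (p : ℤ) + z := hgt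
        have := ih ((p : ℤ) + z).toNat (by omega)
        rw [show ((((p : ℤ) + z).toNat : ℕ) : ℤ) = (p : ℤ) + z from by omega] at this
        rw [this]
    rw [Finset.sum_congr rfl main, Finset.sum_add_distrib]
    clear main step1 key
    congr 1
    · -- swap of sums
      simp only [Finset.mul_sum, Finset.sum_mul]
      rw [Finset.sum_comm]
      apply Finset.sum_congr rfl
      intro q _
      rw [Finset.sum_comm]
      apply Finset.sum_congr rfl
      intro a _
      apply Finset.sum_congr rfl
      intro z _
      ring
    · rw [Finset.sum_ite_eq' (Finset.Icc (-(r : ℤ)) r) (-(p : ℤ))]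
      simp only [mul_ite, mul_zero]
      rw [Finset.sum_ite_eq (Finset.Icc 1 r) p]
      have hw : stepWeight u l d (-(p : ℤ)) = d p := by
        unfold stepWeight
        rw [if_neg (by omega), if_pos (by omega)]
        congr 1
        omega
      by_cases hpr : p ≤ r
      · rw [if_pos (by simp only [Finset.mem_Icc]; omega),
            if_pos (by simp only [Finset.mem_Icc]; omega), hw]
      · rw [if_neg (by simp only [Finset.mem_Icc]; omega),
            if_neg (by simp only [Finset.mem_Icc]; omega)]

/-- Sum form identical to `motzkinCount` but with integer endpoints. -/
def M (r : ℕ) (u : ℕ → ℕ) (l : ℕ) (d : ℕ → ℕ) (s t : ℤ) (n : ℕ) : ℕ :=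
  ∑ f : Fin n → Fin (2 * r + 1),
    if (∀ k : Fin (n + 1),
          0 ≤ s + ∑ i : Fin n, if (i : ℕ) < (k : ℕ) then ((f i : ℤ) - r) else 0) ∧
        s + (∑ i : Fin n, ((f i : ℤ) - r)) = t
    then ∏ i : Fin n, stepWeight u l d ((f i : ℤ) - r)
    else 0

lemma M_succ (s t : ℤ) (n : ℕ) :
    M r u l d s t (n + 1) =
      if 0 ≤ s then
        ∑ j : Fin (2 * r + 1), stepWeight u l d ((j : ℤ) - r) *
          M r u l d (s + ((j : ℤ) - r)) t n
      else 0 := by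
  rw [M]
  by_cases hs : 0 ≤ s
  · rw [if_pos hs]
    simp only [M, Finset.mul_sum]
    rw [← Fintype.sum_prod_type']
    refine Finset.sum_nbij' (fun f => (f 0, Fin.tail f)) (fun x => Fin.cons x.1 x.2)
      (fun _ _ => Finset.mem_univ _) (fun _ _ => Finset.mem_univ _)
      (fun f _ => Fin.cons_self_tail f) (fun x _ => by simp [Fin.tail_cons]) ?_
    intro f _
    have hc : (∀ k : Fin (n + 2),
          0 ≤ s + ∑ i : Fin (n + 1),
            if (i : ℕ) < (k : ℕ) then ((f i : ℤ) - r) else 0)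
        ↔ (∀ k : Fin (n + 1),
            0 ≤ s + (((f 0 : ℤ)) - r) + ∑ i : Fin n,
              if (i : ℕ) < (k : ℕ) then ((Fin.tail f i : ℤ) - r) else 0) := by
      constructor
      · intro h k
        have := h k.succ
        simpa [Fin.sum_univ_succ, Fin.tail, Fin.val_succ,
          Nat.succ_lt_succ_iff, add_assoc, -Fin.val_fin_lt, -Fin.val_fin_le] using this
      · intro h
        rw [Fin.forall_fin_succ]
        refine ⟨by simpa using hs, fun k => ?_⟩
        have := h k
        simpa [Fin.sum_univ_succ, Fin.tail, Fin.val_succ,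
          Nat.succ_lt_succ_iff, add_assoc, -Fin.val_fin_lt, -Fin.val_fin_le] using this
    have he : (s + (∑ i : Fin (n + 1), ((f i : ℤ) - r)) = t)
        ↔ ((s + ((f 0 : ℤ) - r)) + (∑ i : Fin n, ((Fin.tail f i : ℤ) - r)) = t) := by
      rw [Fin.sum_univ_succ, add_assoc]
      rfl
    rw [if_congr (and_congr hc he) rfl rfl, Fin.prod_univ_succ]
    rw [mul_ite, mul_zero]
    rfl
  · rw [if_neg hs]
    apply Finset.sum_eq_zero
    intro f _
    rw [if_neg]
    rintro ⟨h1, -⟩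
    exact hs (by simpa using h1 0)

lemma M_eq (n : ℕ) : ∀ s t : ℤ, M r u l d s t n = pcount r u l d s t n := by
  induction n with
  | zero =>
    intro s t
    rw [M, pcount_zero]
    simp
  | succ n ih =>
    intro s t
    rw [M_succ, pcount]
    by_cases hs : 0 ≤ s
    · rw [if_pos hs, if_pos hs]
      exact Finset.sum_congr rfl (fun j _ => by rw [ih])
    · rw [if_neg hs, if_neg hs]

lemma keyQ (m : ℕ) :
    (pcount r u l d 0 0 (m + 2) : ℚ) =
      (l : ℚ) * (pcount r u l d 0 0 (m + 1) : ℚ) +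
        ∑ ab ∈ Finset.HasAntidiagonal.antidiagonal m, (pcount r u l d 0 0 ab.1 : ℚ) *
          ∑ p ∈ Finset.Icc 1 r, ∑ q ∈ Finset.Icc 1 r,
            (u p : ℚ) * (d q : ℚ) *
              (pcount r u l d ((p : ℤ) - 1) ((q : ℤ) - 1) ab.2 : ℚ) := by
  have h2 : ∀ p ∈ Finset.Icc 1 r, u p * pcount r u l d (p : ℤ) 0 (m + 1) =
      u p * ∑ q ∈ Finset.Icc 1 r, d q * ∑ a ∈ Finset.range (m + 1),
        pcount r u l d ((p : ℤ) - 1) ((q : ℤ) - 1) a * pcount r u l d 0 0 (m - a) := by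
    intro p hp
    simp only [Finset.mem_Icc] at hp
    have := firstPassage r u l d (m + 1) p hp.1
    simp only [Nat.add_sub_cancel] at this
    rw [this]
  have hN : pcount r u l d 0 0 (m + 2) =
      l * pcount r u l d 0 0 (m + 1) +
        ∑ p ∈ Finset.Icc 1 r, u p * ∑ q ∈ Finset.Icc 1 r, d q *
          ∑ a ∈ Finset.range (m + 1),
            pcount r u l d ((p : ℤ) - 1) ((q : ℤ) - 1) a * pcount r u l d 0 0 (m - a) := by
    rw [pcount_zero_succ r u l d (m + 1)]
    congr 1
    exact Finset.sum_congr rfl h2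
  have key3 : ∀ (Y : ℕ → ℚ) (X : ℕ → ℕ → ℕ → ℚ),
      (∑ p ∈ Finset.Icc 1 r, (u p : ℚ) * ∑ q ∈ Finset.Icc 1 r, (d q : ℚ) *
        ∑ a ∈ Finset.range (m + 1), X p q a * Y a)
      = ∑ a ∈ Finset.range (m + 1), Y a * ∑ p ∈ Finset.Icc 1 r,
          ∑ q ∈ Finset.Icc 1 r, (u p : ℚ) * (d q : ℚ) * X p q a := by
    intro Y X
    calc (∑ p ∈ Finset.Icc 1 r, (u p : ℚ) * ∑ q ∈ Finset.Icc 1 r, (d q : ℚ) *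
            ∑ a ∈ Finset.range (m + 1), X p q a * Y a)
        = ∑ p ∈ Finset.Icc 1 r, ∑ q ∈ Finset.Icc 1 r, ∑ a ∈ Finset.range (m + 1),
            (u p : ℚ) * ((d q : ℚ) * (X p q a * Y a)) := by
          simp [Finset.mul_sum]
      _ = ∑ p ∈ Finset.Icc 1 r, ∑ a ∈ Finset.range (m + 1), ∑ q ∈ Finset.Icc 1 r,
            (u p : ℚ) * ((d q : ℚ) * (X p q a * Y a)) :=
          Finset.sum_congr rfl (fun p _ => Finset.sum_comm)
      _ = ∑ a ∈ Finset.range (m + 1), ∑ p ∈ Finset.Icc 1 r, ∑ q ∈ Finset.Icc 1 r,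
            (u p : ℚ) * ((d q : ℚ) * (X p q a * Y a)) := Finset.sum_comm
      _ = ∑ a ∈ Finset.range (m + 1), Y a * ∑ p ∈ Finset.Icc 1 r,
            ∑ q ∈ Finset.Icc 1 r, (u p : ℚ) * (d q : ℚ) * X p q a := by
          simp only [Finset.mul_sum]
          exact Finset.sum_congr rfl (fun a _ => Finset.sum_congr rfl (fun p _ =>
            Finset.sum_congr rfl (fun q _ => by ring)))
  rw [hN]
  push_cast
  congr 1
  rw [key3 (fun a => (pcount r u l d 0 0 (m - a) : ℚ))
    (fun p q a => (pcount r u l d ((p : ℤ) - 1) ((q : ℤ) - 1) a : ℚ))]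
  rw [Nat.sum_antidiagonal_eq_sum_range_succ_mk]
  conv_rhs => rw [← Finset.sum_range_reflect]
  simp only [Nat.succ_sub_one]
  apply Finset.sum_congr rfl
  intro a ha
  simp only [Finset.mem_range] at ha
  rw [show m - (m - a) = a from by omega]

/-- `A_{0,0} = 1 + l·x·A_{0,0} + x²·A_{0,0}·Σ_{p=1}^{r}Σ_{q=1}^{r} u_p d_q A_{p−1,q−1}`. -/
theorem motzkin_rank_gf_eq (r : ℕ) (hr : 1 ≤ r) (u : ℕ → ℕ) (l : ℕ) (d : ℕ → ℕ) :
    motzkinGF r u l d 0 0 =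
      1 + C (l : ℚ) * X * motzkinGF r u l d 0 0
        + X ^ 2 * motzkinGF r u l d 0 0 *
            ∑ p ∈ Finset.Icc 1 r, ∑ q ∈ Finset.Icc 1 r,
              C ((u p : ℚ) * (d q : ℚ)) * motzkinGF r u l d (p - 1) (q - 1) := by
  classical
  have hmc : ∀ (s t : ℕ) (n : ℕ),
      motzkinCount r u l d s t n = pcount r u l d (s : ℤ) (t : ℤ) n :=
    fun s t n => M_eq r u l d n (s : ℤ) (t : ℤ)
  ext n
  rw [mul_assoc (PowerSeries.C (l:ℚ)), mul_assoc (X ^ 2)]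
  simp only [map_add, PowerSeries.coeff_one, PowerSeries.coeff_C_mul, motzkinGF,
    coeff_mk, hmc, Nat.cast_zero]
  have hS : ∀ b : ℕ, (coeff b) (∑ p ∈ Finset.Icc 1 r, ∑ q ∈ Finset.Icc 1 r,
        PowerSeries.C ((u p : ℚ) * (d q : ℚ)) * PowerSeries.mk
          (fun n => (pcount r u l d ((p - 1 : ℕ) : ℤ) ((q - 1 : ℕ) : ℤ) n : ℚ))) =
      ∑ p ∈ Finset.Icc 1 r, ∑ q ∈ Finset.Icc 1 r,
        (u p : ℚ) * (d q : ℚ) * (pcount r u l d ((p : ℤ) - 1) ((q : ℤ) - 1) b : ℚ) := by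
    intro b
    rw [map_sum]
    apply Finset.sum_congr rfl
    intro p hp
    rw [map_sum]
    apply Finset.sum_congr rfl
    intro q hq
    simp only [Finset.mem_Icc] at hp hq
    rw [PowerSeries.coeff_C_mul, coeff_mk]
    have e1 : (((p - 1 : ℕ) : ℤ)) = (p : ℤ) - 1 := by omega
    have e2 : (((q - 1 : ℕ) : ℤ)) = (q : ℤ) - 1 := by omega
    rw [e1, e2]
  have hX2 : ∀ (k : ℕ) (φ : PowerSeries ℚ), k < 2 → (coeff k) (X ^ 2 * φ) = 0 := by
    intro k φ hk
    rw [show (X : PowerSeries ℚ) ^ 2 = X * X from sq X, mul_assoc]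
    interval_cases k
    · rw [PowerSeries.coeff_zero_eq_constantCoeff, map_mul, constantCoeff_X, zero_mul]
    · rw [PowerSeries.coeff_succ_X_mul, PowerSeries.coeff_zero_eq_constantCoeff,
        map_mul, constantCoeff_X, zero_mul]
  match n with
  | 0 =>
    have h1 : (coeff 0) (X * PowerSeries.mk
        (fun n => (pcount r u l d 0 0 n : ℚ))) = 0 := by
      rw [PowerSeries.coeff_zero_eq_constantCoeff, map_mul, constantCoeff_X, zero_mul]
    rw [h1, hX2 0 _ (by omega), pcount_zero]
    norm_num
  | 1 =>
    rw [PowerSeries.coeff_succ_X_mul, coeff_mk, hX2 1 _ (by omega)]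
    have h1 := pcount_zero_succ r u l d 0
    have hz : ∀ p ∈ Finset.Icc 1 r, u p * pcount r u l d (p : ℤ) 0 0 = 0 := by
      intro p hp
      simp only [Finset.mem_Icc] at hp
      rw [pcount_zero, if_neg (by intro h; omega), mul_zero]
    rw [Finset.sum_congr rfl hz] at h1
    simp only [Finset.sum_const_zero, add_zero] at h1
    rw [show (0:ℕ) + 1 = 1 from rfl] at h1
    rw [h1, pcount_zero, if_pos ⟨le_refl 0, rfl⟩]
    push_cast
    ring
  | (m + 2) =>
    rw [show m + 2 = (m + 1) + 1 from rfl, PowerSeries.coeff_succ_X_mul, coeff_mk,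
      show (m + 1) + 1 = m + 2 from rfl, PowerSeries.coeff_X_pow_mul,
      PowerSeries.coeff_mul]
    rw [Finset.sum_congr rfl (fun (ab : ℕ × ℕ) (_ : ab ∈ Finset.HasAntidiagonal.antidiagonal m) => by
      rw [coeff_mk, hS ab.2])]
    rw [keyQ r u l d m]
    norm_num
end

section
/- Fix a rank r ≥ 1 and natural number weights u_1,…,u_r, l, d_1,…,d_r, and let A_{s,t}(x) = Σ_{n≥0} |𝒜_{s,t}(n)| x^n ∈ ℚ⟦x⟧. Then for all i, j with 1 ≤ i ≤ r−1 and 0 ≤ j ≤ r−1, the generating functions satisfy A_{i,j} = A_{i−1,j−1} + x·A_{0,j}·Σ_{q=1}^{r} d_q A_{i−1,q−1}, where A_{i−1,j−1} is interpreted as 0 when j = 0. -/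
open PowerSeries Finset

def cnt (r : ℕ) (u : ℕ → ℕ) (l : ℕ) (d : ℕ → ℕ) (s : ℕ) : ℕ → ℤ → ℕ
  | 0, t => if t = (s : ℤ) then 1 else 0
  | n+1, t => if t < 0 then 0 else
      ∑ z : Fin (2 * r + 1), stepWeight u l d ((z : ℤ) - r) * cnt r u l d s n (t - ((z : ℤ) - r))

lemma cnt_neg (r : ℕ) (u : ℕ → ℕ) (l : ℕ) (d : ℕ → ℕ) (s n : ℕ) {t : ℤ} (ht : t < 0) :
    cnt r u l d s n t = 0 := by
  cases n with
  | zero => rw [cnt, if_neg (by omega)]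
  | succ n => rw [cnt, if_pos ht]

lemma cnt_succ (r : ℕ) (u : ℕ → ℕ) (l : ℕ) (d : ℕ → ℕ) (s n : ℕ) {t : ℤ} (ht : 0 ≤ t) :
    cnt r u l d s (n+1) t =
      ∑ z : Fin (2 * r + 1), stepWeight u l d ((z : ℤ) - r) * cnt r u l d s n (t - ((z : ℤ) - r)) := by
  rw [cnt, if_neg (not_lt.mpr ht)]

lemma motzkinCount_eq_cnt (r : ℕ) (u : ℕ → ℕ) (l : ℕ) (d : ℕ → ℕ) (s : ℕ) :
    ∀ (n : ℕ) (t : ℕ), motzkinCount r u l d s t n = cnt r u l d s n (t : ℤ) := by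
  intro n
  induction n with
  | zero =>
    intro t
    simp [motzkinCount, cnt, eq_comm]
  | succ n IH =>
    intro t
    rw [motzkinCount, ← (Fin.snocEquiv (fun _ => Fin (2*r+1))).sum_comp,
      Fintype.sum_prod_type, cnt_succ r u l d s n (by positivity)]
    simp only [Fin.snocEquiv_apply]
    refine Finset.sum_congr rfl fun z _ => ?_
    set z' : ℤ := (z : ℤ) - r with hz'
    have hTot : ∀ g : Fin n → Fin (2*r+1),
        (∑ i : Fin (n+1), (((Fin.snoc (α := fun _ => Fin (2*r+1)) g z i) : ℤ) - r))
          = (∑ i : Fin n, (((g i : Fin (2*r+1)) : ℤ) - r)) + z' := by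
      intro g
      rw [Fin.sum_univ_castSucc]
      simp [Fin.snoc_castSucc, Fin.snoc_last, hz']
    have hPart : ∀ (g : Fin n → Fin (2*r+1)) (k : Fin (n+1)),
        (∑ i : Fin (n+1),
            if (i : ℕ) < ((Fin.castSucc k : Fin (n+2)) : ℕ) then ((Fin.snoc (α := fun _ => Fin (2*r+1)) g z i) : ℤ) - r else 0)
          = ∑ i : Fin n, if (i : ℕ) < (k : ℕ) then ((g i : Fin (2*r+1)) : ℤ) - r else 0 := by
      intro g k
      have hk := k.isLt
      rw [Fin.sum_univ_castSucc]
      simp only [Fin.snoc_castSucc, Fin.snoc_last, Fin.coe_castSucc, Fin.val_last]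
      rw [if_neg (by omega), add_zero]
    have hLast : ∀ g : Fin n → Fin (2*r+1),
        (∑ i : Fin (n+1),
            if (i : ℕ) < ((Fin.last (n+1) : Fin (n+2)) : ℕ) then ((Fin.snoc (α := fun _ => Fin (2*r+1)) g z i) : ℤ) - r else 0)
          = (∑ i : Fin n, (((g i : Fin (2*r+1)) : ℤ) - r)) + z' := by
      intro g
      rw [Finset.sum_congr rfl (fun i _ => if_pos (by simpa using i.isLt)), hTot g]
    have key : ∀ g : Fin n → Fin (2*r+1),
        ((∀ k : Fin (n+2),
            0 ≤ (s : ℤ) + ∑ i : Fin (n+1), if (i : ℕ) < (k : ℕ) then ((Fin.snoc (α := fun _ => Fin (2*r+1)) g z i) : ℤ) - r else 0) ∧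
          (s : ℤ) + (∑ i : Fin (n+1), (((Fin.snoc (α := fun _ => Fin (2*r+1)) g z i) : ℤ) - r)) = t)
        ↔ ((∀ k : Fin (n+1),
            0 ≤ (s : ℤ) + ∑ i : Fin n, if (i : ℕ) < (k : ℕ) then ((g i : Fin (2*r+1)) : ℤ) - r else 0) ∧
          (s : ℤ) + (∑ i : Fin n, (((g i : Fin (2*r+1)) : ℤ) - r)) = (t : ℤ) - z') := by
      intro g
      constructor
      · rintro ⟨h1, h2⟩
        rw [hTot] at h2
        refine ⟨fun k => ?_, by omega⟩
        have := h1 (Fin.castSucc k)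
        rwa [hPart] at this
      · rintro ⟨h1, h2⟩
        constructor
        · rw [Fin.forall_fin_succ']
          refine ⟨fun k => by rw [hPart]; exact h1 k, ?_⟩
          rw [hLast]
          omega
        · rw [hTot]; omega
    have hprod : ∀ g : Fin n → Fin (2*r+1),
        (∏ i : Fin (n+1), stepWeight u l d (((Fin.snoc (α := fun _ => Fin (2*r+1)) g z i) : ℤ) - r))
          = (∏ i : Fin n, stepWeight u l d (((g i : Fin (2*r+1)) : ℤ) - r)) * stepWeight u l d z' := by
      intro g
      rw [Fin.prod_univ_castSucc]
      simp [Fin.snoc_castSucc, Fin.snoc_last, hz']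
    simp only [key, hprod]
    by_cases hz : 0 ≤ (t : ℤ) - z'
    · have htn : ((((t : ℤ) - z').toNat : ℕ) : ℤ) = (t : ℤ) - z' := Int.toNat_of_nonneg hz
      rw [← htn, ← IH, motzkinCount, Finset.mul_sum]
      refine Finset.sum_congr rfl fun g _ => ?_
      rw [mul_ite, mul_zero]
      exact if_congr Iff.rfl (mul_comm _ _) rfl
    · rw [cnt_neg r u l d s n (by omega), mul_zero]
      refine Finset.sum_eq_zero fun g _ => if_neg ?_
      rintro ⟨h1, h2⟩
      have hfin := h1 (Fin.last n)
      have hfull : (∑ i : Fin n,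
          if (i : ℕ) < ((Fin.last n : Fin (n+1)) : ℕ) then ((g i : Fin (2*r+1)) : ℤ) - r else 0)
            = ∑ i : Fin n, (((g i : Fin (2*r+1)) : ℤ) - r) :=
        Finset.sum_congr rfl fun i _ => if_pos (by simpa using i.isLt)
      rw [hfull] at hfin
      omega

lemma down_reindex (r : ℕ) (u : ℕ → ℕ) (l : ℕ) (d : ℕ → ℕ) (c : ℤ → ℕ) :
    (∑ z : Fin (2*r+1), stepWeight u l d ((z : ℤ) - r) *
        (if 1 ≤ 0 - ((z : ℤ) - r) then c (0 - ((z : ℤ) - r) - 1) else 0))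
      = ∑ q ∈ Finset.Icc 1 r, d q * c ((q : ℤ) - 1) := by
  rw [Fin.sum_univ_eq_sum_range (fun m => stepWeight u l d ((m : ℤ) - r) *
        (if 1 ≤ 0 - ((m : ℤ) - r) then c (0 - ((m : ℤ) - r) - 1) else 0))]
  rw [← Finset.sum_subset (Finset.range_subset_range.mpr (by omega) : range r ⊆ range (2*r+1))
      (fun m _ hm => by
        rw [if_neg (by simp only [Finset.mem_range, not_lt] at hm; omega), mul_zero])]
  refine Finset.sum_nbij' (fun m => r - m) (fun q => r - q)
    (fun m hm => ?_) (fun q hq => ?_) (fun m hm => ?_) (fun q hq => ?_) (fun m hm => ?_)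
  · simp only [Finset.mem_range] at hm; simp only [Finset.mem_Icc]; omega
  · simp only [Finset.mem_Icc] at hq; simp only [Finset.mem_range]; omega
  · simp only [Finset.mem_range] at hm; show r - (r - m) = m; omega
  · simp only [Finset.mem_Icc] at hq; show r - (r - q) = q; omega
  · simp only [Finset.mem_range] at hm
    rw [if_pos (by omega)]
    have hsw : stepWeight u l d ((m : ℤ) - r) = d (r - m) := by
      rw [stepWeight, if_neg (by omega), if_pos (by omega)]
      congr 1; omega
    rw [hsw]
    congr 1
    congr 1
    push_cast [Nat.cast_sub (by omega : m ≤ r)]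
    ring

def tailSum (r : ℕ) (u : ℕ → ℕ) (l : ℕ) (d : ℕ → ℕ) (i : ℕ) (n : ℕ) (j : ℤ) : ℕ :=
  ∑ p ∈ Finset.HasAntidiagonal.antidiagonal n,
    cnt r u l d 0 p.1 j * ∑ q ∈ Finset.Icc 1 r, d q * cnt r u l d (i-1) p.2 ((q : ℤ) - 1)

lemma cnt_key (r : ℕ) (u : ℕ → ℕ) (l : ℕ) (d : ℕ → ℕ) (i : ℕ) (hi1 : 1 ≤ i) (hir : i ≤ r) :
    ∀ (n : ℕ) (j : ℤ),
      cnt r u l d i n j =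
        (if 1 ≤ j then cnt r u l d (i-1) n (j-1) else 0) +
        (if n = 0 then 0 else tailSum r u l d i (n-1) j) := by
  have hcast : ((i - 1 : ℕ) : ℤ) = (i : ℤ) - 1 := by omega
  intro n
  induction n with
  | zero =>
    intro j
    rw [if_pos rfl, add_zero, cnt, cnt, hcast]
    split_ifs <;> omega
  | succ n IH =>
    intro j
    rw [if_neg (Nat.succ_ne_zero n), Nat.add_sub_cancel]
    by_cases hj0 : 0 ≤ j
    · -- main case
      have claimB : tailSum r u l d i n j =
          (if j = 0 then (∑ q ∈ Finset.Icc 1 r, d q * cnt r u l d (i-1) n ((q : ℤ) - 1)) else 0)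
            + ∑ z : Fin (2*r+1), stepWeight u l d ((z : ℤ) - r) *
                (if n = 0 then 0 else tailSum r u l d i (n-1) (j - ((z : ℤ) - r))) := by
        cases n with
        | zero =>
          simp only [tailSum, Finset.Nat.antidiagonal_zero, Finset.sum_singleton, cnt,
            Nat.cast_zero, mul_zero, Finset.sum_const_zero, add_zero]
          split_ifs <;> simp_all
        | succ m =>
          rw [tailSum, Finset.Nat.sum_antidiagonal_succ]
          have h1 : cnt r u l d 0 0 j * (∑ q ∈ Finset.Icc 1 r, d q * cnt r u l d (i-1) (m+1) ((q : ℤ) - 1))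
              = (if j = 0 then (∑ q ∈ Finset.Icc 1 r, d q * cnt r u l d (i-1) (m+1) ((q : ℤ) - 1)) else 0) := by
            rw [cnt]
            split_ifs with h h' h' <;> simp_all <;> omega
          rw [h1]
          congr 1
          have h2 : ∀ p : ℕ × ℕ, p ∈ Finset.HasAntidiagonal.antidiagonal m →
              cnt r u l d 0 (p.1 + 1) j * (∑ q ∈ Finset.Icc 1 r, d q * cnt r u l d (i-1) p.2 ((q : ℤ) - 1))
                = ∑ z : Fin (2*r+1), stepWeight u l d ((z : ℤ) - r) *
                    (cnt r u l d 0 p.1 (j - ((z : ℤ) - r)) * ∑ q ∈ Finset.Icc 1 r, d q * cnt r u l d (i-1) p.2 ((q : ℤ) - 1)) := by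
            intro p _
            rw [cnt_succ r u l d 0 p.1 hj0, Finset.sum_mul]
            exact Finset.sum_congr rfl fun z _ => by ring
          rw [Finset.sum_congr rfl h2, Finset.sum_comm]
          refine Finset.sum_congr rfl fun z _ => ?_
          rw [if_neg (Nat.succ_ne_zero m), Nat.add_sub_cancel, tailSum, Finset.mul_sum]
      rw [cnt_succ r u l d i n hj0]
      simp only [IH, mul_add, Finset.sum_add_distrib]
      rw [claimB]
      by_cases hj1 : 1 ≤ j
      · rw [if_pos hj1, if_neg (by omega)]
        have claimA : (∑ z : Fin (2*r+1), stepWeight u l d ((z : ℤ) - r) *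
            (if 1 ≤ j - ((z : ℤ) - r) then cnt r u l d (i-1) n (j - ((z : ℤ) - r) - 1) else 0))
              = cnt r u l d (i-1) (n+1) (j-1) := by
          rw [cnt_succ r u l d (i-1) n (by omega)]
          refine Finset.sum_congr rfl fun z _ => ?_
          by_cases h : 1 ≤ j - ((z : ℤ) - r)
          · rw [if_pos h]
            congr 1
            ring_nf
          · rw [if_neg h, mul_zero, cnt_neg r u l d (i-1) n (by omega), mul_zero]
        rw [claimA]
        omega
      · have hj : j = 0 := by omega
        subst hj
        rw [if_neg hj1, if_pos rfl]
        rw [down_reindex r u l d (fun x => cnt r u l d (i-1) n x)]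
        omega
    · -- j < 0 : everything vanishes
      rw [cnt_neg r u l d i (n+1) (by omega), if_neg (by omega), tailSum,
        Finset.sum_eq_zero fun p _ => by rw [cnt_neg r u l d 0 p.1 (by omega), zero_mul]]
      omega

/-- for `1 ≤ i ≤ r−1` and `0 ≤ j ≤ r−1`,
`A_{i,j} = A_{i−1,j−1} + x·A_{0,j}·Σ_{q=1}^{r} d_q A_{i−1,q−1}`, where `A_{i−1,j−1}`
is interpreted as `0` when `j = 0` (the convention `A_{s,t} = 0` for `t < 0`). -/
theorem motzkin_rank_gf_inner (r : ℕ) (hr : 1 ≤ r) (u : ℕ → ℕ) (l : ℕ) (d : ℕ → ℕ)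
    (i j : ℕ) (hi1 : 1 ≤ i) (hi2 : i ≤ r - 1) (hj : j ≤ r - 1) :
    motzkinGF r u l d i j =
      (if j = 0 then 0 else motzkinGF r u l d (i - 1) (j - 1))
        + X * motzkinGF r u l d 0 j *
            ∑ q ∈ Finset.Icc 1 r, C (d q : ℚ) * motzkinGF r u l d (i - 1) (q - 1) := by
  have hir : i ≤ r := le_trans hi2 (Nat.sub_le r 1)
  ext n
  rw [map_add, mul_assoc]
  -- coefficient of the tail factor
  have hG3 : ∀ b : ℕ,
      (coeff b) (∑ q ∈ Finset.Icc 1 r, C (d q : ℚ) * motzkinGF r u l d (i - 1) (q - 1))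
        = ((∑ q ∈ Finset.Icc 1 r, d q * cnt r u l d (i-1) b ((q : ℤ) - 1) : ℕ) : ℚ) := by
    intro b
    rw [map_sum, Nat.cast_sum]
    refine Finset.sum_congr rfl fun q hq => ?_
    have hq1 : ((q - 1 : ℕ) : ℤ) = (q : ℤ) - 1 := by
      simp only [Finset.mem_Icc] at hq; omega
    rw [coeff_C_mul, motzkinGF, coeff_mk, motzkinCount_eq_cnt, hq1, Nat.cast_mul]
  have hite : (coeff n) (if j = 0 then 0 else motzkinGF r u l d (i - 1) (j - 1))
      = ((if 1 ≤ (j : ℤ) then cnt r u l d (i-1) n ((j : ℤ) - 1) else 0 : ℕ) : ℚ) := by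
    rcases Nat.eq_zero_or_pos j with h | h
    · subst h; rw [if_pos rfl, if_neg (by omega), map_zero, Nat.cast_zero]
    · rw [if_neg (by omega), if_pos (by exact_mod_cast h), motzkinGF, coeff_mk,
        motzkinCount_eq_cnt]
      congr 2
      omega
  rw [hite, motzkinGF, coeff_mk, motzkinCount_eq_cnt,
    cnt_key r u l d i hi1 hir n (j : ℤ), Nat.cast_add]
  congr 1
  cases n with
  | zero =>
    rw [coeff_zero_X_mul]
    simp
  | succ m =>
    rw [coeff_succ_X_mul, coeff_mul, if_neg (Nat.succ_ne_zero m), Nat.add_sub_cancel,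
      tailSum, Nat.cast_sum]
    refine Finset.sum_congr rfl fun p _ => ?_
    rw [motzkinGF, coeff_mk, motzkinCount_eq_cnt, hG3, Nat.cast_mul]
end

section
/- Fix a rank r ≥ 1 and natural number weights u_1,…,u_r, l, d_1,…,d_r, and let A_{s,t}(x) = Σ_{n≥0} |𝒜_{s,t}(n)| x^n ∈ ℚ⟦x⟧. Then for all j with 1 ≤ j ≤ r−1, the generating functions satisfy A_{0,j} = x·A_{0,0}·Σ_{p=1}^{r} u_p A_{p−1,j−1}. -/
open PowerSeries Finset

/-! ### Auxiliary definitions -/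

/-- Height increment after `a` steps. -/
def ht (r n : ℕ) (f : Fin n → Fin (2*r+1)) (a : ℕ) : ℤ :=
  ∑ i ∈ Finset.range a, if h : i < n then ((f ⟨i,h⟩ : ℤ) - r) else 0

/-- Weight of a path. -/
def wt (u : ℕ → ℕ) (l : ℕ) (d : ℕ → ℕ) (r n : ℕ) (f : Fin n → Fin (2*r+1)) : ℕ :=
  ∏ i : Fin n, stepWeight u l d ((f i : ℤ) - r)

/-- The path `f` goes from `s` to `t` without ever dipping below the x-axis. -/
def Good (r n s t : ℕ) (f : Fin n → Fin (2*r+1)) : Prop :=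
  (∀ a ≤ n, 0 ≤ (s:ℤ) + ht r n f a) ∧ (s:ℤ) + ht r n f n = t

instance (r n s t : ℕ) (f : Fin n → Fin (2*r+1)) : Decidable (Good r n s t f) := by
  unfold Good; infer_instance

def glue_s8 (r n m : ℕ) (hm : m ≤ n) (p : ℕ) (f0 : Fin m → Fin (2*r+1))
    (f1 : Fin (n-m) → Fin (2*r+1)) : Fin (n+1) → Fin (2*r+1) := fun i =>
  if h : (i : ℕ) < m then f0 ⟨i, h⟩
  else if h2 : m < (i : ℕ) then f1 ⟨(i : ℕ) - (m+1), by omega⟩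
  else ⟨(p + r) % (2*r+1), Nat.mod_lt _ (by omega)⟩

def splitL (r n m : ℕ) (hm : m ≤ n) (f : Fin (n+1) → Fin (2*r+1)) :
    Fin m → Fin (2*r+1) := fun i => f ⟨i, by omega⟩

def splitR (r n m : ℕ) (hm : m ≤ n) (f : Fin (n+1) → Fin (2*r+1)) :
    Fin (n-m) → Fin (2*r+1) := fun i => f ⟨m+1+(i:ℕ), by omega⟩

/-! ### Height lemmas -/

lemma ht_zero (r n : ℕ) (f : Fin n → Fin (2*r+1)) : ht r n f 0 = 0 := by simp [ht]

lemma ht_succ (r n : ℕ) (f : Fin n → Fin (2*r+1)) (a : ℕ) :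
    ht r n f (a+1) = ht r n f a + (if h : a < n then ((f ⟨a,h⟩ : ℤ) - r) else 0) :=
  Finset.sum_range_succ _ _

lemma finsum_eq_ht (r n : ℕ) (f : Fin n → Fin (2*r+1)) (a : ℕ) :
    (∑ i : Fin n, if (i : ℕ) < a then ((f i : ℤ) - r) else 0) = ht r n f a := by
  set S : ℕ → ℤ := fun i => if i < a then (if h : i < n then ((f ⟨i,h⟩ : ℤ) - r) else 0) else 0
    with hS
  have h1 : (∑ i : Fin n, if (i : ℕ) < a then ((f i : ℤ) - r) else 0) = ∑ i ∈ range n, S i := by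
    rw [← Fin.sum_univ_eq_sum_range S n]
    refine Finset.sum_congr rfl fun i _ => ?_
    simp only [hS, dif_pos i.isLt, Fin.eta]
  have h2 : ht r n f a = ∑ i ∈ range a, S i := by
    rw [ht]
    refine Finset.sum_congr rfl fun i hi => ?_
    simp only [hS, if_pos (mem_range.1 hi)]
  have h3 : ∑ i ∈ range n, S i = ∑ i ∈ range (max a n), S i := by
    refine Finset.sum_subset (range_subset_range.2 (le_max_right _ _)) fun x _ hx => ?_
    simp only [mem_range, not_lt] at hx
    simp [hS, dif_neg (not_lt.2 hx)]
  have h4 : ∑ i ∈ range a, S i = ∑ i ∈ range (max a n), S i := by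
    refine Finset.sum_subset (range_subset_range.2 (le_max_left _ _)) fun x _ hx => ?_
    simp only [mem_range, not_lt] at hx
    simp [hS, if_neg (not_lt.2 hx)]
  rw [h1, h2, h3, h4]

lemma motzkinCount_eq (r : ℕ) (u : ℕ → ℕ) (l : ℕ) (d : ℕ → ℕ) (s t n : ℕ) :
    motzkinCount r u l d s t n = ∑ f ∈ univ.filter (Good r n s t), wt u l d r n f := by
  rw [Finset.sum_filter, motzkinCount]
  refine Finset.sum_congr rfl fun f _ => ?_
  refine if_congr ?_ rfl rfl
  unfold Good
  constructor
  · rintro ⟨h1, h2⟩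
    refine ⟨fun a ha => ?_, ?_⟩
    · have := h1 ⟨a, by omega⟩
      rwa [finsum_eq_ht] at this
    · rw [← h2]
      congr 1
      rw [← finsum_eq_ht]
      refine Finset.sum_congr rfl fun i _ => ?_
      rw [if_pos i.isLt]
  · rintro ⟨h1, h2⟩
    refine ⟨fun k => ?_, ?_⟩
    · rw [finsum_eq_ht]; exact h1 k (by omega)
    · rw [show (∑ i : Fin n, ((f i : ℤ) - r)) = ht r n f n from ?_]
      · exact h2
      · rw [← finsum_eq_ht]
        refine Finset.sum_congr rfl fun i _ => ?_
        rw [if_pos i.isLt]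

lemma ht_glue_le {r n m : ℕ} (hm : m ≤ n) (p : ℕ) (f0 : Fin m → Fin (2*r+1))
    (f1 : Fin (n-m) → Fin (2*r+1)) : ∀ a ≤ m,
    ht r (n+1) (glue_s8 r n m hm p f0 f1) a = ht r m f0 a := by
  intro a ha
  induction a with
  | zero => simp [ht]
  | succ a ih =>
    rw [ht_succ, ht_succ, ih (by omega)]
    congr 1
    rw [dif_pos (show a < n+1 by omega), dif_pos (show a < m by omega)]
    rw [show glue_s8 r n m hm p f0 f1 ⟨a, by omega⟩ = f0 ⟨a, by omega⟩ from ?_]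
    unfold glue_s8
    rw [dif_pos (show ((⟨a, by omega⟩ : Fin (n+1)) : ℕ) < m by simpa using (by omega : a < m))]

lemma ht_glue_ge {r n m : ℕ} (hm : m ≤ n) {p : ℕ} (hp : p ≤ r) (f0 : Fin m → Fin (2*r+1))
    (f1 : Fin (n-m) → Fin (2*r+1)) : ∀ a,
    ht r (n+1) (glue_s8 r n m hm p f0 f1) (m+1+a) = ht r m f0 m + p + ht r (n-m) f1 a := by
  intro a
  induction a with
  | zero =>
    rw [show m+1+0 = m+1 by omega, ht_succ, ht_glue_le hm p f0 f1 m le_rfl]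
    rw [dif_pos (show m < n+1 by omega)]
    have hg : glue_s8 r n m hm p f0 f1 ⟨m, by omega⟩
        = ⟨(p + r) % (2*r+1), Nat.mod_lt _ (by omega)⟩ := by
      unfold glue_s8
      rw [dif_neg (by simp), dif_neg (by simp)]
    rw [hg]
    have hmod : (p + r) % (2*r+1) = p + r := Nat.mod_eq_of_lt (by omega)
    simp only [ht, Finset.range_zero, Finset.sum_empty]
    simp only [hmod]
    push_cast
    ring
  | succ a ih =>
    rw [show m+1+(a+1) = (m+1+a)+1 by omega, ht_succ, ih, ht_succ]
    by_cases hc : a < n - m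
    · rw [dif_pos (show m+1+a < n+1 by omega), dif_pos hc]
      have hg : glue_s8 r n m hm p f0 f1 ⟨m+1+a, by omega⟩ = f1 ⟨a, hc⟩ := by
        unfold glue_s8
        rw [dif_neg (by simp; omega), dif_pos (by simp; omega)]
        exact congrArg f1 (Fin.ext (by simp only [Fin.val_mk]; omega))
      rw [hg]
      ring
    · rw [dif_neg (by omega), dif_neg hc]
      ring

/-! ### Pointwise glue lemmas -/

lemma glue_at_lt {r n m : ℕ} (hm : m ≤ n) (p : ℕ) (f0 : Fin m → Fin (2*r+1))
    (f1 : Fin (n-m) → Fin (2*r+1)) {i : Fin (n+1)} (h : (i:ℕ) < m) :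
    glue_s8 r n m hm p f0 f1 i = f0 ⟨i, h⟩ := by
  unfold glue_s8; rw [dif_pos h]

lemma glue_at_mid {r n m : ℕ} (hm : m ≤ n) (p : ℕ) (f0 : Fin m → Fin (2*r+1))
    (f1 : Fin (n-m) → Fin (2*r+1)) {i : Fin (n+1)} (h : (i:ℕ) = m) :
    glue_s8 r n m hm p f0 f1 i = ⟨(p + r) % (2*r+1), Nat.mod_lt _ (by omega)⟩ := by
  unfold glue_s8; rw [dif_neg (by omega), dif_neg (by omega)]

lemma glue_at_gt {r n m : ℕ} (hm : m ≤ n) (p : ℕ) (f0 : Fin m → Fin (2*r+1))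
    (f1 : Fin (n-m) → Fin (2*r+1)) {i : Fin (n+1)} (h : m < (i:ℕ)) :
    glue_s8 r n m hm p f0 f1 i = f1 ⟨(i:ℕ) - (m+1), by omega⟩ := by
  unfold glue_s8; rw [dif_neg (by omega), dif_pos h]

lemma wt_eq_prod_range (u : ℕ → ℕ) (l : ℕ) (d : ℕ → ℕ) (r n : ℕ) (f : Fin n → Fin (2*r+1)) :
    wt u l d r n f
      = ∏ i ∈ range n, (if h : i < n then stepWeight u l d ((f ⟨i,h⟩ : ℤ) - r) else 1) := by
  rw [← Fin.prod_univ_eq_prod_range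
    (fun i => if h : i < n then stepWeight u l d ((f ⟨i,h⟩ : ℤ) - r) else 1) n, wt]
  exact Finset.prod_congr rfl fun i _ => by rw [dif_pos i.isLt]

lemma wt_glue (u : ℕ → ℕ) (l : ℕ) (d : ℕ → ℕ) {r n m : ℕ} (hm : m ≤ n) {p : ℕ}
    (hp1 : 1 ≤ p) (hp : p ≤ r) (f0 : Fin m → Fin (2*r+1)) (f1 : Fin (n-m) → Fin (2*r+1)) :
    wt u l d r (n+1) (glue_s8 r n m hm p f0 f1)
      = wt u l d r m f0 * (u p * wt u l d r (n-m) f1) := by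
  set g := glue_s8 r n m hm p f0 f1 with hg
  set F : ℕ → ℕ := fun i =>
    if h : i < n+1 then stepWeight u l d ((g ⟨i,h⟩ : ℤ) - r) else 1 with hF
  have h1 : wt u l d r (n+1) g = ∏ i ∈ range (m + (1 + (n-m))), F i := by
    rw [wt_eq_prod_range, show m + (1 + (n-m)) = n+1 by omega]
  rw [h1, Finset.prod_range_add, Finset.prod_range_add]
  have e0 : (∏ x ∈ range m, F x) = wt u l d r m f0 := by
    rw [wt_eq_prod_range]
    refine Finset.prod_congr rfl fun x hx => ?_
    have hx' : x < m := mem_range.1 hx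
    rw [hF]; dsimp only; rw [hg]
    rw [dif_pos (show x < n+1 by omega), dif_pos hx',
      glue_at_lt hm p f0 f1 (show ((⟨x, by omega⟩ : Fin (n+1)) : ℕ) < m from hx')]
  have e1 : (∏ x ∈ range 1, F (m + x)) = u p := by
    rw [Finset.prod_range_one, hF]; dsimp only; rw [hg]
    rw [dif_pos (show m + 0 < n+1 by omega),
      glue_at_mid hm p f0 f1 (show ((⟨m+0, by omega⟩ : Fin (n+1)) : ℕ) = m by simp)]
    have hmod : (p + r) % (2*r+1) = p + r := Nat.mod_eq_of_lt (by omega)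
    have hz : ((⟨(p + r) % (2*r+1), Nat.mod_lt _ (by omega)⟩ : Fin (2*r+1)) : ℤ) - r
        = (p : ℤ) := by
      simp only [hmod]; push_cast; ring
    rw [hz, stepWeight, if_pos (by exact_mod_cast hp1)]
    simp
  have e2 : (∏ x ∈ range (n-m), F (m + (1 + x))) = wt u l d r (n-m) f1 := by
    rw [wt_eq_prod_range]
    refine Finset.prod_congr rfl fun x hx => ?_
    have hx' : x < n - m := mem_range.1 hx
    rw [hF]; dsimp only; rw [hg]
    rw [dif_pos (show m + (1+x) < n+1 by omega), dif_pos hx',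
      glue_at_gt hm p f0 f1 (show m < ((⟨m+(1+x), by omega⟩ : Fin (n+1)) : ℕ) by simp)]
    have : f1 ⟨((⟨m+(1+x), by omega⟩ : Fin (n+1)) : ℕ) - (m+1), by omega⟩ = f1 ⟨x, hx'⟩ :=
      congrArg f1 (Fin.ext (by simp only [Fin.val_mk]; omega))
    rw [this]
  rw [e0, e1, e2]

/-! ### Split / glue inverses -/

lemma splitL_glue {r n m : ℕ} (hm : m ≤ n) (p : ℕ) (f0 : Fin m → Fin (2*r+1))
    (f1 : Fin (n-m) → Fin (2*r+1)) :
    splitL r n m hm (glue_s8 r n m hm p f0 f1) = f0 := by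
  funext i
  rw [splitL, glue_at_lt hm p f0 f1 (show ((⟨(i:ℕ), by omega⟩ : Fin (n+1)) : ℕ) < m from i.isLt)]

lemma splitR_glue {r n m : ℕ} (hm : m ≤ n) (p : ℕ) (f0 : Fin m → Fin (2*r+1))
    (f1 : Fin (n-m) → Fin (2*r+1)) :
    splitR r n m hm (glue_s8 r n m hm p f0 f1) = f1 := by
  funext i
  rw [splitR, glue_at_gt hm p f0 f1
    (show m < ((⟨m+1+(i:ℕ), by omega⟩ : Fin (n+1)) : ℕ) by simp only [Fin.val_mk]; omega)]
  exact congrArg f1 (Fin.ext (by simp only [Fin.val_mk]; omega))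

lemma glue_val_mid {r n m : ℕ} (hm : m ≤ n) {p : ℕ} (hp : p ≤ r)
    (f0 : Fin m → Fin (2*r+1)) (f1 : Fin (n-m) → Fin (2*r+1)) :
    ((glue_s8 r n m hm p f0 f1 ⟨m, by omega⟩ : Fin (2*r+1)) : ℕ) = p + r := by
  rw [glue_at_mid hm p f0 f1 (by simp)]
  exact Nat.mod_eq_of_lt (by omega)

lemma glue_split {r n m : ℕ} (hm : m ≤ n) {p : ℕ} (hp : p ≤ r)
    (f : Fin (n+1) → Fin (2*r+1)) (hf : ((f ⟨m, by omega⟩ : Fin (2*r+1)) : ℕ) = p + r) :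
    glue_s8 r n m hm p (splitL r n m hm f) (splitR r n m hm f) = f := by
  funext i
  rcases lt_trichotomy ((i:ℕ)) m with h | h | h
  · rw [glue_at_lt hm _ _ _ h, splitL]
  · rw [glue_at_mid hm _ _ _ h]
    refine Fin.ext ?_
    rw [Fin.val_mk, Nat.mod_eq_of_lt (by omega), ← hf]
    exact congrArg (fun z => ((f z : Fin (2*r+1)) : ℕ)) (Fin.ext h.symm)
  · rw [glue_at_gt hm _ _ _ h, splitR]
    exact congrArg f (Fin.ext (by simp only [Fin.val_mk]; omega))

/-! ### Facts about a path in the fiber -/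

lemma last_zero_facts {r n m j : ℕ} (hj : 1 ≤ j) (hm : m ≤ n) {f : Fin (n+1) → Fin (2*r+1)}
    (hGood : Good r (n+1) 0 j f)
    (hfg : Nat.findGreatest (fun a => ht r (n+1) f a = 0) n = m) :
    ht r (n+1) f m = 0 ∧ (∀ a, m < a → a ≤ n+1 → 1 ≤ ht r (n+1) f a) ∧
      r + 1 ≤ ((f ⟨m, by omega⟩ : Fin (2*r+1)) : ℕ) ∧
      ((f ⟨m, by omega⟩ : Fin (2*r+1)) : ℕ) ≤ 2*r := by
  obtain ⟨hnn, hend⟩ := hGood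
  rw [Nat.findGreatest_eq_iff] at hfg
  obtain ⟨hmn, hPm, hmax⟩ := hfg
  have hz : ht r (n+1) f m = 0 := by
    rcases Nat.eq_zero_or_pos m with h0 | h0
    · subst h0; exact ht_zero r (n+1) f
    · exact hPm (by omega)
  have hendj : ht r (n+1) f (n+1) = (j : ℤ) := by
    have := hend; omega
  have hpos : ∀ a, m < a → a ≤ n+1 → 1 ≤ ht r (n+1) f a := by
    intro a ha1 ha2
    rcases Nat.lt_or_ge a (n+1) with h | h
    · have h1 := hnn a (by omega)
      have h2 := hmax ha1 (by omega)
      omega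
    · have : a = n+1 := by omega
      rw [this, hendj]
      exact_mod_cast hj
  have hup : r + 1 ≤ ((f ⟨m, by omega⟩ : Fin (2*r+1)) : ℕ) := by
    have h1 := hpos (m+1) (by omega) (by omega)
    rw [ht_succ, hz, dif_pos (show m < n+1 by omega)] at h1
    omega
  exact ⟨hz, hpos, hup, by omega⟩

/-! ### The fiber identity -/

lemma fiber (r : ℕ) (u : ℕ → ℕ) (l : ℕ) (d : ℕ → ℕ) (j n m : ℕ) (hj : 1 ≤ j) (hm : m ≤ n) :
    (∑ f ∈ univ.filter (fun f : Fin (n+1) → Fin (2*r+1) =>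
        Good r (n+1) 0 j f ∧ Nat.findGreatest (fun a => ht r (n+1) f a = 0) n = m),
      wt u l d r (n+1) f)
    = motzkinCount r u l d 0 0 m *
        ∑ p ∈ Icc 1 r, u p * motzkinCount r u l d (p-1) (j-1) (n-m) := by
  classical
  have rhs : motzkinCount r u l d 0 0 m *
        ∑ p ∈ Icc 1 r, u p * motzkinCount r u l d (p-1) (j-1) (n-m)
      = ∑ x ∈ ((Icc 1 r) ×ˢ ((univ : Finset (Fin m → Fin (2*r+1))) ×ˢ
            (univ : Finset (Fin (n-m) → Fin (2*r+1))))).filter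
          (fun x => Good r m 0 0 x.2.1 ∧ Good r (n-m) (x.1-1) (j-1) x.2.2),
          wt u l d r m x.2.1 * (u x.1 * wt u l d r (n-m) x.2.2) := by
    rw [Finset.sum_filter, Finset.sum_product]
    rw [Finset.mul_sum]
    refine Finset.sum_congr rfl fun p _ => ?_
    rw [Finset.sum_product, motzkinCount_eq, motzkinCount_eq, Finset.sum_filter,
      Finset.sum_filter, Finset.sum_mul]
    refine Finset.sum_congr rfl fun f0 _ => ?_
    rw [Finset.mul_sum, Finset.mul_sum]
    refine Finset.sum_congr rfl fun f1 _ => ?_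
    dsimp only
    by_cases hG0 : Good r m 0 0 f0 <;> by_cases hG1 : Good r (n-m) (p-1) (j-1) f1 <;>
      simp [hG0, hG1]
  rw [rhs]
  refine Finset.sum_nbij'
    (i := fun f => ((((f ⟨m, by omega⟩ : Fin (2*r+1)) : ℕ) - r),
      (splitL r n m hm f, splitR r n m hm f)))
    (j := fun x => glue_s8 r n m hm x.1 x.2.1 x.2.2) ?_ ?_ ?_ ?_ ?_
  · -- forward membership
    intro f hf
    rw [mem_filter] at hf
    obtain ⟨-, hGood, hfg⟩ := hf
    obtain ⟨hz, hpos, hup, hub⟩ := last_zero_facts hj hm hGood hfg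
    set p : ℕ := ((f ⟨m, by omega⟩ : Fin (2*r+1)) : ℕ) - r with hpdef
    have hp1 : 1 ≤ p := by omega
    have hpr : p ≤ r := by omega
    have hval : ((f ⟨m, by omega⟩ : Fin (2*r+1)) : ℕ) = p + r := by omega
    have hgs := glue_split hm hpr f hval
    have hL : ∀ a ≤ m, ht r m (splitL r n m hm f) a = ht r (n+1) f a := by
      intro a ha
      rw [← ht_glue_le hm p (splitL r n m hm f) (splitR r n m hm f) a ha, hgs]
    have hR : ∀ a, ht r (n-m) (splitR r n m hm f) a = ht r (n+1) f (m+1+a) - p := by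
      intro a
      have h3 := ht_glue_ge hm hpr (splitL r n m hm f) (splitR r n m hm f) a
      rw [hgs, hL m le_rfl, hz] at h3
      omega
    rw [mem_filter, mem_product, mem_product]
    refine ⟨⟨by rw [mem_Icc]; omega, mem_univ _, mem_univ _⟩, ⟨?_, ?_⟩, ?_, ?_⟩
    · intro a ha
      rw [hL a ha]
      have := hGood.1 a (by omega)
      omega
    · rw [hL m le_rfl, hz]; simp
    · intro a ha
      rw [hR a]
      have h1 := hpos (m+1+a) (by omega) (by omega)
      have hc : ((p - 1 : ℕ) : ℤ) = (p : ℤ) - 1 := by omega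
      omega
    · rw [hR (n-m)]
      have h2 : ht r (n+1) f (n+1) = (j : ℤ) := by
        have := hGood.2; omega
      rw [show m+1+(n-m) = n+1 by omega, h2]
      have hc : ((p - 1 : ℕ) : ℤ) = (p : ℤ) - 1 := by omega
      have hcj : ((j - 1 : ℕ) : ℤ) = (j : ℤ) - 1 := by omega
      omega
  · -- backward membership
    rintro ⟨p, f0, f1⟩ hx
    rw [mem_filter, mem_product, mem_product] at hx
    obtain ⟨⟨hp, -⟩, hG0, hG1⟩ := hx
    dsimp only at hp hG0 hG1 ⊢
    rw [mem_Icc] at hp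
    obtain ⟨hp1, hpr⟩ := hp
    have hgle := ht_glue_le hm p f0 f1
    have h00 : ht r m f0 m = 0 := by have := hG0.2; omega
    have hgge : ∀ a, ht r (n+1) (glue_s8 r n m hm p f0 f1) (m+1+a)
        = p + ht r (n-m) f1 a := by
      intro a
      have h3 := ht_glue_ge hm hpr f0 f1 a
      rw [h00] at h3
      omega
    have hgpos : ∀ a, m < a → a ≤ n+1 → 1 ≤ ht r (n+1) (glue_s8 r n m hm p f0 f1) a := by
      intro a ha1 ha2
      have h1 := hgge (a-m-1)
      rw [show m+1+(a-m-1) = a by omega] at h1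
      have h2 := hG1.1 (a-m-1) (by omega)
      have hc : ((p - 1 : ℕ) : ℤ) = (p : ℤ) - 1 := by omega
      omega
    rw [mem_filter]
    refine ⟨mem_univ _, ⟨?_, ?_⟩, ?_⟩
    · intro a ha
      rcases le_or_gt a m with h | h
      · rw [hgle a h]
        have := hG0.1 a (by omega)
        omega
      · have := hgpos a h ha
        omega
    · have h1 := hgge (n-m)
      rw [show m+1+(n-m) = n+1 by omega] at h1
      have h2 := hG1.2
      have hc : ((p - 1 : ℕ) : ℤ) = (p : ℤ) - 1 := by omega
      have hcj : ((j - 1 : ℕ) : ℤ) = (j : ℤ) - 1 := by omega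
      omega
    · rw [Nat.findGreatest_eq_iff]
      refine ⟨hm, ?_, ?_⟩
      · intro _
        rw [hgle m le_rfl]; exact h00
      · intro a ha1 ha2
        have := hgpos a ha1 (by omega)
        omega
  · -- left inverse
    intro f hf
    rw [mem_filter] at hf
    obtain ⟨-, hGood, hfg⟩ := hf
    obtain ⟨hz, hpos, hup, hub⟩ := last_zero_facts hj hm hGood hfg
    dsimp only
    exact glue_split hm (p := ((f ⟨m, by omega⟩ : Fin (2*r+1)) : ℕ) - r) (by omega) f (by omega)
  · -- right inverse
    rintro ⟨p, f0, f1⟩ hx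
    rw [mem_filter, mem_product, mem_product] at hx
    obtain ⟨⟨hp, -⟩, -, -⟩ := hx
    dsimp only at hp ⊢
    rw [mem_Icc] at hp
    have h1 := glue_val_mid hm hp.2 f0 f1
    refine Prod.ext ?_ (Prod.ext ?_ ?_)
    · dsimp only
      omega
    · exact splitL_glue hm p f0 f1
    · exact splitR_glue hm p f0 f1
  · -- weights agree
    intro f hf
    rw [mem_filter] at hf
    obtain ⟨-, hGood, hfg⟩ := hf
    obtain ⟨hz, hpos, hup, hub⟩ := last_zero_facts hj hm hGood hfg
    dsimp only
    set p : ℕ := ((f ⟨m, by omega⟩ : Fin (2*r+1)) : ℕ) - r with hpdef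
    have hgs := glue_split hm (show p ≤ r by omega) f (by omega)
    conv_lhs => rw [← hgs]
    rw [wt_glue u l d hm (by omega) (by omega)]

/-! ### Key counting identity -/

lemma motzkin_key (r : ℕ) (u : ℕ → ℕ) (l : ℕ) (d : ℕ → ℕ) (j n : ℕ) (hj : 1 ≤ j) :
    motzkinCount r u l d 0 j (n+1)
      = ∑ m ∈ range (n+1), motzkinCount r u l d 0 0 m *
          ∑ p ∈ Icc 1 r, u p * motzkinCount r u l d (p-1) (j-1) (n-m) := by
  classical
  rw [motzkinCount_eq]
  rw [← Finset.sum_fiberwise_of_maps_to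
    (g := fun f : Fin (n+1) → Fin (2*r+1) =>
      Nat.findGreatest (fun a => ht r (n+1) f a = 0) n)
    (t := range (n+1))
    (fun f _ => mem_range.2 (Nat.lt_succ_of_le (Nat.findGreatest_le n)))
    (wt u l d r (n+1))]
  refine Finset.sum_congr rfl fun m hmm => ?_
  rw [Finset.filter_filter]
  exact fiber r u l d j n m hj (by have := mem_range.1 hmm; omega)

lemma motzkinCount_zero_len (r : ℕ) (u : ℕ → ℕ) (l : ℕ) (d : ℕ → ℕ) (j : ℕ) (hj : 1 ≤ j) :
    motzkinCount r u l d 0 j 0 = 0 := by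
  rw [motzkinCount]
  refine Finset.sum_eq_zero fun f _ => ?_
  rw [if_neg]
  rintro ⟨-, h2⟩
  simp only [Finset.univ_eq_empty, Finset.sum_empty, Nat.cast_zero, add_zero] at h2
  have : (j : ℤ) = 0 := h2.symm
  omega

/-- for `1 ≤ j ≤ r−1`, `A_{0,j} = x·A_{0,0}·Σ_{p=1}^{r} u_p A_{p−1,j−1}`. -/
theorem motzkin_rank_gf_zero_row (r : ℕ) (hr : 1 ≤ r) (u : ℕ → ℕ) (l : ℕ) (d : ℕ → ℕ)
    (j : ℕ) (hj1 : 1 ≤ j) (hj2 : j ≤ r - 1) :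
    motzkinGF r u l d 0 j =
      X * motzkinGF r u l d 0 0 *
        ∑ p ∈ Finset.Icc 1 r, C (u p : ℚ) * motzkinGF r u l d (p - 1) (j - 1) := by
  ext n
  rw [mul_assoc]
  cases n with
  | zero =>
    rw [motzkinGF, coeff_mk, motzkinCount_zero_len r u l d j hj1]
    simp
  | succ n =>
    rw [PowerSeries.coeff_succ_X_mul, PowerSeries.coeff_mul]
    simp only [motzkinGF, coeff_mk]
    rw [motzkin_key r u l d j n hj1, Finset.Nat.sum_antidiagonal_eq_sum_range_succ_mk]
    push_cast
    refine Finset.sum_congr rfl fun m _ => ?_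
    simp only [map_sum, PowerSeries.coeff_C_mul, coeff_mk, Finset.mul_sum]
end
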